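/- arXiv:0801.0874 — 2 statements merged into one kernel-verified Lean document; each statement's English description precedes it below -/
import Mathlib

section
/- For every signed composition μ of n, G_μ is the internal semidirect product T_μ ⋊ S_{μ^+}: T_μ is a normal subgroup of G_μ, T_μ ∩ S_{μ^+} = {1}, and every element of G_μ can be written uniquely as t·w with t ∈ T_μ and w ∈ S_{μ^+}. -/
open Equiv SemidirectProduct

namespace CycSol

/-- The action of the symmetric group on the "torus" `(ℤ/r)^n` by permuting coordinates. -/
def act (r n : ℕ) : Equiv.Perm (Fin n) →* MulAut (Multiplicative (Fin n → ZMod r)) where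
  toFun w :=
    { toFun := fun f => Multiplicative.ofAdd fun i => Multiplicative.toAdd f (w⁻¹ i)
      invFun := fun f => Multiplicative.ofAdd fun i => Multiplicative.toAdd f (w i)
      left_inv := fun f => by
        show Multiplicative.ofAdd (fun i => Multiplicative.toAdd f (w⁻¹ (w i))) = f
        simp
      right_inv := fun f => by
        show Multiplicative.ofAdd (fun i => Multiplicative.toAdd f (w (w⁻¹ i))) = f
        simp
      map_mul' := fun f g => rfl }
  map_one' := by
    ext f : 1
    show Multiplicative.ofAdd (fun i => Multiplicative.toAdd f ((1 : Equiv.Perm (Fin n))⁻¹ i)) = f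
    simp
  map_mul' := fun u v => by
    ext f : 1
    show Multiplicative.ofAdd (fun i => Multiplicative.toAdd f ((u * v)⁻¹ i)) = _
    simp [Equiv.Perm.mul_apply, mul_inv_rev]

/-- The wreath product `(ℤ/r) ≀ S_n`, i.e. the complex reflection group `G(r,1,n)`. -/
abbrev Grn (r n : ℕ) :=
  SemidirectProduct (Multiplicative (Fin n → ZMod r)) (Equiv.Perm (Fin n)) (act r n)

/-- The generator `t_i`. -/
def tGen (r n : ℕ) (i : Fin n) : Grn r n :=
  inl (Multiplicative.ofAdd (Pi.single i 1))

/-- `sGen i j` is the transposition `(i,j)`, viewed inside `G(r,1,n)`. -/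
def sGen (r n : ℕ) (i j : Fin n) : Grn r n := inr (Equiv.swap i j)

/-- `t^α` for a vector `α ∈ {0,…,r-1}^n`. -/
def tPow (r n : ℕ) (α : Fin n → Fin r) : Grn r n :=
  inl (Multiplicative.ofAdd fun i => ((α i : ℕ) : ZMod r))

/-- The generating set `Π = {t_1,…,t_n, s_1,…,s_{n-1}}`. -/
def PiSet (r n : ℕ) : Set (Grn r n) :=
  {g | (∃ i : Fin n, g = tGen r n i) ∨
       (∃ i j : Fin n, (j : ℕ) = (i : ℕ) + 1 ∧ g = sGen r n i j)}

/-- The `Π`-length of an element of `G(r,1,n)`. -/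
noncomputable def len (r n : ℕ) (g : Grn r n) : ℕ :=
  sInf {k | ∃ l : List (Grn r n), l.length = k ∧ (∀ x ∈ l, x ∈ PiSet r n) ∧ l.prod = g}

/-- A signed composition of `n`: a list of nonzero integers whose absolute values sum to `n`. -/
def IsSignedComp (n : ℕ) (μ : List ℤ) : Prop :=
  (∀ x ∈ μ, x ≠ 0) ∧ (μ.map Int.natAbs).sum = n

/-- The type of signed compositions of `n`. -/
abbrev SComp (n : ℕ) := {l : List ℤ // IsSignedComp n l}

/-- `μ̄_i = |μ_1| + ⋯ + |μ_i|`. -/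
def absPrefix (μ : List ℤ) (i : ℕ) : ℕ := ((μ.take i).map Int.natAbs).sum

/-- The subset `Π_μ ⊆ Π` attached to a signed composition `μ` (here `t_j, s_j` are indexed by
`j : Fin n`, i.e. `0`-based). -/
def PiMu (r n : ℕ) (μ : List ℤ) : Set (Grn r n) :=
  {g | (∃ j : Fin n, (∃ i, i < μ.length ∧ 0 < μ.getD i 0 ∧
          absPrefix μ i ≤ (j : ℕ) ∧ (j : ℕ) < absPrefix μ (i + 1)) ∧ g = tGen r n j) ∨
       (∃ j k : Fin n, (k : ℕ) = (j : ℕ) + 1 ∧ (∃ i, i < μ.length ∧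
          absPrefix μ i ≤ (j : ℕ) ∧ (k : ℕ) < absPrefix μ (i + 1)) ∧ g = sGen r n j k)}

/-- The reflection subgroup `G_μ = ⟨Π_μ⟩`. -/
def Gmu (r n : ℕ) (μ : List ℤ) : Subgroup (Grn r n) := Subgroup.closure (PiMu r n μ)

/-- The subgroup `T = (ℤ/r)^n` of `G(r,1,n)`. -/
def Tsub (r n : ℕ) : Subgroup (Grn r n) :=
  (inl : Multiplicative (Fin n → ZMod r) →* Grn r n).range

/-- The subgroup `S_n` of `G(r,1,n)`. -/
def Ssub (r n : ℕ) : Subgroup (Grn r n) :=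
  (inr : Equiv.Perm (Fin n) →* Grn r n).range

/-- `T_{-μ}`: the subgroup of `T` generated by those `t_i` not lying in `G_μ`. -/
def Tneg (r n : ℕ) (μ : List ℤ) : Subgroup (Grn r n) :=
  Subgroup.closure {g | ∃ i : Fin n, tGen r n i ∉ Gmu r n μ ∧ g = tGen r n i}

/-- The Young subgroup `S_{μ^+} = G_μ ∩ S_n`, as a subgroup of `S_n`. -/
def youngS (r n : ℕ) (μ : List ℤ) : Subgroup (Equiv.Perm (Fin n)) :=
  (Gmu r n μ).comap (inr : Equiv.Perm (Fin n) →* Grn r n)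

/-- `𝒟_{μ^+}`: the permutations of minimal (Coxeter = `Π`-) length in their right coset
`S_{μ^+} w`. -/
noncomputable def Dset (r n : ℕ) (μ : List ℤ) : Set (Equiv.Perm (Fin n)) :=
  {d | ∀ w : Equiv.Perm (Fin n), w * d⁻¹ ∈ youngS r n μ →
        len r n (inr d) ≤ len r n (inr w)}

/-- `𝒟_{μ^+ν^+} = 𝒟_{μ^+} ∩ 𝒟_{ν^+}^{-1}`. -/
noncomputable def DD (r n : ℕ) (μ ν : List ℤ) : Set (Equiv.Perm (Fin n)) :=
  Dset r n μ ∩ {d | d⁻¹ ∈ Dset r n ν}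

/-- `𝓔_μ`: the elements of minimal `Π`-length in their right coset `G_μ e`. -/
noncomputable def Ecal (r n : ℕ) (μ : List ℤ) : Set (Grn r n) :=
  {e | ∀ g : Grn r n, g * e⁻¹ ∈ Gmu r n μ → len r n e ≤ len r n g}

/-- `E_μ = Σ_{e ∈ 𝓔_μ} e` in the group algebra `R G(r,1,n)`. -/
noncomputable def Emu (R : Type) [CommRing R] (r n : ℕ) (μ : List ℤ) :
    MonoidAlgebra R (Grn r n) :=
  ∑ᶠ e ∈ Ecal r n μ, MonoidAlgebra.of R (Grn r n) e

/-- The generating set `{E_μ : μ a signed composition of n}` of the cyclotomic Solomon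
algebra. -/
def SolSet (R : Type) [CommRing R] (r n : ℕ) : Set (MonoidAlgebra R (Grn r n)) :=
  {x | ∃ μ : List ℤ, IsSignedComp n μ ∧ x = Emu R r n μ}

/-- The cyclotomic Solomon algebra `Sol(G(r,1,n))`. -/
noncomputable def Sol (R : Type) [CommRing R] (r n : ℕ) :
    Subalgebra R (MonoidAlgebra R (Grn r n)) :=
  Algebra.adjoin R (SolSet R r n)


lemma inr_rightHom_mem_Gmu (r n : ℕ) (μ : List ℤ) {g : Grn r n} (hg : g ∈ Gmu r n μ) :
    inr (rightHom g) ∈ Gmu r n μ := by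
  have : Gmu r n μ ≤ (Gmu r n μ).comap
      ((inr : Equiv.Perm (Fin n) →* Grn r n).comp rightHom) := by
    rw [Gmu, Subgroup.closure_le]
    rintro x (⟨j, _, rfl⟩ | ⟨j, k, _, _, rfl⟩)
    · simp only [Subgroup.mem_comap, MonoidHom.comp_apply, tGen, rightHom_inl, map_one]
      exact one_mem (Gmu r n μ)
    · simp only [Subgroup.mem_comap, MonoidHom.comp_apply, sGen, rightHom_inr]
      exact Subgroup.subset_closure (Or.inr ⟨j, k, ‹_›, ‹_›, rfl⟩)
  exact this hg

theorem stmt2 (r n : ℕ) (hr : 2 ≤ r) (hn : 1 ≤ n) (μ : List ℤ) (hμ : IsSignedComp n μ) :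
    (∀ t ∈ Gmu r n μ ⊓ Tsub r n, ∀ g ∈ Gmu r n μ, g * t * g⁻¹ ∈ Gmu r n μ ⊓ Tsub r n) ∧
    (Gmu r n μ ⊓ Tsub r n) ⊓ (Gmu r n μ ⊓ Ssub r n) = ⊥ ∧
    (∀ g ∈ Gmu r n μ, ∃! p : Grn r n × Grn r n,
        p.1 ∈ Gmu r n μ ⊓ Tsub r n ∧ p.2 ∈ Gmu r n μ ⊓ Ssub r n ∧ g = p.1 * p.2) := by
  have hT : ∀ x : Grn r n, x ∈ Tsub r n ↔ rightHom x = 1 := by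
    intro x
    rw [Tsub, range_inl_eq_ker_rightHom, MonoidHom.mem_ker]
  refine ⟨?_, ?_, ?_⟩
  · intro t ht g hg
    rw [Subgroup.mem_inf] at ht ⊢
    obtain ⟨ht1, ht2⟩ := ht
    refine ⟨mul_mem (mul_mem hg ht1) (inv_mem hg), ?_⟩
    rw [hT] at ht2 ⊢
    simp [ht2]
    exact ht2
  · rw [eq_bot_iff]
    intro x hx
    rw [Subgroup.mem_inf, Subgroup.mem_inf, Subgroup.mem_inf] at hx
    obtain ⟨⟨-, hxT⟩, -, b, rfl⟩ := hx
    rw [hT, rightHom_inr] at hxT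
    simp [hxT, Subgroup.mem_bot]
  · intro g hg
    have hw : inr (rightHom g) ∈ Gmu r n μ := inr_rightHom_mem_Gmu r n μ hg
    refine ⟨(g * (inr (rightHom g))⁻¹, inr (rightHom g)),
      ⟨Subgroup.mem_inf.2 ⟨mul_mem hg (inv_mem hw), ?_⟩,
       Subgroup.mem_inf.2 ⟨hw, ⟨rightHom g, rfl⟩⟩, by group⟩, ?_⟩
    · rw [hT]; simp
    · rintro ⟨t', w'⟩ ⟨ht', hw', rfl⟩
      rw [Subgroup.mem_inf] at ht' hw'
      obtain ⟨-, ht'T⟩ := ht'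
      obtain ⟨-, b, rfl⟩ := hw'
      have hb : b = rightHom (t' * inr b) := by
        rw [hT] at ht'T
        simp [ht'T]
        exact ht'T
      simp only [Prod.mk.injEq]
      constructor
      · rw [← hb]; group
      · rw [← hb]

end CycSol
end

section
/- For signed compositions μ, ν of n and d ∈ 𝒟_{μ^+ν^+}, the number of elements of the form t^α d (with α ∈ {0,…,r−1}^n) which have minimal Π-length in their (G_μ, G_ν)-double coset equals |T_{−μ} ∩ d T_{−ν} d^{−1}|, and this cardinality equals r^{N(d)} where N(d) = #{ i ∈ {1,…,n} : t_i ∉ G_μ and t_{i^d} ∉ G_ν }. -/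
open Equiv SemidirectProduct

namespace CycSol

section Inversions
variable {n : ℕ}

/-- The set of inversions of a permutation. -/
def invSet (w : Perm (Fin n)) : Finset (Fin n × Fin n) :=
  Finset.univ.filter fun p => p.1 < p.2 ∧ w p.2 < w p.1

/-- Number of inversions. -/
def invn (w : Perm (Fin n)) : ℕ := (invSet w).card

lemma mem_invSet {w : Perm (Fin n)} {p : Fin n × Fin n} :
    p ∈ invSet w ↔ p.1 < p.2 ∧ w p.2 < w p.1 := by
  simp [invSet]

lemma invn_one : invn (1 : Perm (Fin n)) = 0 := by
  simp only [invn, invSet, Finset.card_eq_zero]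
  ext p
  simp only [Finset.mem_filter, Finset.mem_univ, true_and, Finset.notMem_empty, iff_false]
  rintro ⟨h1, h2⟩
  simp only [Perm.one_apply] at h2
  exact absurd h1 (not_lt.2 h2.le)

/-- chain lemma : adjacent ascent implies strict monotonicity -/
lemma strictMono_of_adjacent {α : Type*} [Preorder α] (g : Fin n → α)
    (h : ∀ j k : Fin n, (k : ℕ) = (j : ℕ) + 1 → g j < g k) : StrictMono g := by
  have key : ∀ m : ℕ, ∀ a b : Fin n, (b : ℕ) = (a : ℕ) + (m + 1) → g a < g b := by
    intro m
    induction m with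
    | zero => intro a b hab; exact h a b (by omega)
    | succ m ih =>
      intro a b hab
      have hc : (a : ℕ) + 1 < n := by have := b.isLt; omega
      set c : Fin n := ⟨(a : ℕ) + 1, hc⟩ with hcdef
      exact lt_trans (h a c rfl) (ih c b (by simp [hcdef]; omega))
  intro a b hab
  have : ∃ m : ℕ, (b : ℕ) = (a : ℕ) + (m + 1) := ⟨(b : ℕ) - (a : ℕ) - 1, by omega⟩
  obtain ⟨m, hm⟩ := this
  exact key m a b hm

lemma perm_eq_one_of_strictMono {w : Perm (Fin n)} (h : StrictMono w) : w = 1 := by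
  haveI : WellFoundedLT (Fin n) := Finite.to_wellFoundedLT
  have h2 : StrictMono (w⁻¹ : Perm (Fin n)) := by
    intro a b hab
    have := h.lt_iff_lt (a := w⁻¹ a) (b := w⁻¹ b)
    simp only [Perm.coe_inv, Equiv.apply_symm_apply] at this
    exact this.1 hab
  ext i
  have h1 : i ≤ w i := h.le_apply
  have h3 : w i ≤ w⁻¹ (w i) := h2.le_apply
  simp only [Perm.coe_inv, Equiv.symm_apply_apply] at h3
  simp only [Perm.one_apply]
  exact le_antisymm h3 h1

lemma invn_eq_zero_iff {w : Perm (Fin n)} : invn w = 0 ↔ w = 1 := by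
  constructor
  · intro h
    apply perm_eq_one_of_strictMono
    intro a b hab
    rcases lt_trichotomy (w a) (w b) with h1 | h1 | h1
    · exact h1
    · exact absurd (w.injective h1) hab.ne
    · exfalso
      have hmem : (a, b) ∈ invSet w := mem_invSet.2 ⟨hab, h1⟩
      have hpos : 0 < (invSet w).card := Finset.card_pos.2 ⟨_, hmem⟩
      simp only [invn] at h
      omega
  · rintro rfl; exact invn_one

lemma exists_descent {w : Perm (Fin n)} (h : w ≠ 1) :
    ∃ j k : Fin n, (k : ℕ) = (j : ℕ) + 1 ∧ w k < w j := by
  by_contra hc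
  push_neg at hc
  apply h
  apply perm_eq_one_of_strictMono
  apply strictMono_of_adjacent
  intro j k hk
  have h1 := hc j k hk
  have h2 : w j ≠ w k := fun he => by
    have : j = k := w.injective he
    omega
  exact lt_of_le_of_ne h1 h2

/-- order is preserved by an adjacent swap except at the swapped pair itself. -/
lemma swap_lt_swap {j k a b : Fin n} (hk : (k : ℕ) = (j : ℕ) + 1) (hab : a < b)
    (hne : ¬(a = j ∧ b = k)) : swap j k a < swap j k b := by
  have hab' : (a : ℕ) < (b : ℕ) := hab
  rcases eq_or_ne a j with rfl | haj
  · rw [swap_apply_left]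
    rcases eq_or_ne b k with rfl | hbk
    · exact absurd ⟨rfl, rfl⟩ hne
    · have hbj : b ≠ a := hab.ne'
      rw [swap_apply_of_ne_of_ne hbj hbk]
      have h1 : (b : ℕ) ≠ (k : ℕ) := fun h => hbk (Fin.ext h)
      rw [Fin.lt_def]
      omega
  · rcases eq_or_ne a k with rfl | hak
    · rw [swap_apply_right]
      have hbj : b ≠ j := by
        intro h
        rw [h] at hab'
        omega
      have hbk : b ≠ a := hab.ne'
      rw [swap_apply_of_ne_of_ne hbj hbk]
      rw [Fin.lt_def]
      omega
    · rw [swap_apply_of_ne_of_ne haj hak]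
      rcases eq_or_ne b j with rfl | hbj
      · rw [swap_apply_left]
        rw [Fin.lt_def]
        omega
      · rcases eq_or_ne b k with rfl | hbk
        · rw [swap_apply_right]
          have h1 : (a : ℕ) ≠ (j : ℕ) := fun h => haj (Fin.ext h)
          rw [Fin.lt_def]
          omega
        · rw [swap_apply_of_ne_of_ne hbj hbk]
          exact hab

/-- Key bijection: counting pairs transported by an adjacent swap. -/
lemma card_pairs_swap {j k : Fin n} (hk : (k : ℕ) = (j : ℕ) + 1)
    (P Q : Fin n × Fin n → Prop) [DecidablePred P] [DecidablePred Q]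
    (h : ∀ a b : Fin n, a < b → ¬(a = j ∧ b = k) → (P (a, b) ↔ Q (swap j k a, swap j k b))) :
    ((Finset.univ.filter fun p : Fin n × Fin n => p.1 < p.2 ∧ P p).erase (j, k)).card =
    ((Finset.univ.filter fun p : Fin n × Fin n => p.1 < p.2 ∧ Q p).erase (j, k)).card := by
  have hjk : j < k := by rw [Fin.lt_def]; omega
  apply Finset.card_bij' (i := fun p _ => (swap j k p.1, swap j k p.2))
    (j := fun p _ => (swap j k p.1, swap j k p.2))
  · -- membership forward
    intro p hp
    rw [Finset.mem_erase, Finset.mem_filter] at hp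
    obtain ⟨hpne, -, hlt, hP⟩ := hp
    have hne : ¬(p.1 = j ∧ p.2 = k) := by
      rintro ⟨h1, h2⟩; exact hpne (Prod.ext h1 h2)
    rw [Finset.mem_erase, Finset.mem_filter]
    refine ⟨?_, Finset.mem_univ _, swap_lt_swap hk hlt hne, (h p.1 p.2 hlt hne).1 hP⟩
    intro hcon
    rw [Prod.ext_iff] at hcon
    obtain ⟨h1, h2⟩ := hcon
    have h1' : p.1 = k := by
      have := congrArg (swap j k) h1; simpa [swap_apply_left] using this
    have h2' : p.2 = j := by
      have := congrArg (swap j k) h2; simpa [swap_apply_right] using this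
    rw [h1', h2'] at hlt
    exact absurd hjk (not_lt.2 hlt.le)
  · -- membership backward
    intro p hp
    rw [Finset.mem_erase, Finset.mem_filter] at hp
    obtain ⟨hpne, -, hlt, hQ⟩ := hp
    have hne : ¬(p.1 = j ∧ p.2 = k) := by
      rintro ⟨h1, h2⟩; exact hpne (Prod.ext h1 h2)
    rw [Finset.mem_erase, Finset.mem_filter]
    have hlt' := swap_lt_swap hk hlt hne
    have hne' : ¬(swap j k p.1 = j ∧ swap j k p.2 = k) := by
      rintro ⟨h1, h2⟩
      have h1' : p.1 = k := by
        have := congrArg (swap j k) h1; simpa [swap_apply_left] using this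
      have h2' : p.2 = j := by
        have := congrArg (swap j k) h2; simpa [swap_apply_right] using this
      rw [h1', h2'] at hlt
      exact absurd hjk (not_lt.2 hlt.le)
    refine ⟨?_, Finset.mem_univ _, hlt', ?_⟩
    · intro hcon
      rw [Prod.ext_iff] at hcon
      obtain ⟨h1, h2⟩ := hcon
      have h1' : p.1 = k := by
        have := congrArg (swap j k) h1; simpa [swap_apply_left] using this
      have h2' : p.2 = j := by
        have := congrArg (swap j k) h2; simpa [swap_apply_right] using this
      rw [h1', h2'] at hlt
      exact absurd hjk (not_lt.2 hlt.le)
    · obtain ⟨p1, p2⟩ := p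
      have hiff := h (swap j k p1) (swap j k p2) hlt' hne'
      simp only [swap_apply_self] at hiff
      exact hiff.2 hQ
  · intro p _; simp
  · intro p _; simp

lemma invSet_mul_swap {w : Perm (Fin n)} {j k : Fin n} :
    invSet (w * swap j k) =
      Finset.univ.filter fun p : Fin n × Fin n =>
        p.1 < p.2 ∧ w (swap j k p.2) < w (swap j k p.1) := rfl

lemma jk_mem_invSet_mul_swap {w : Perm (Fin n)} {j k : Fin n} (hk : (k : ℕ) = (j : ℕ) + 1) :
    ((j, k) ∈ invSet (w * swap j k) ↔ w j < w k) ∧ ((j, k) ∈ invSet w ↔ w k < w j) := by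
  have hjk : j < k := by rw [Fin.lt_def]; omega
  constructor
  · rw [mem_invSet]
    simp only [Perm.mul_apply, swap_apply_left, swap_apply_right]
    exact ⟨fun h => h.2, fun h => ⟨hjk, h⟩⟩
  · rw [mem_invSet]
    exact ⟨fun h => h.2, fun h => ⟨hjk, h⟩⟩

lemma invn_mul_swap_core {w : Perm (Fin n)} {j k : Fin n} (hk : (k : ℕ) = (j : ℕ) + 1) :
    ((invSet (w * swap j k)).erase (j, k)).card = ((invSet w).erase (j, k)).card := by
  rw [invSet_mul_swap]
  have : invSet w = Finset.univ.filter fun p : Fin n × Fin n => p.1 < p.2 ∧ w p.2 < w p.1 := rfl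
  rw [this]
  exact card_pairs_swap hk _ _ (fun a b _ _ => Iff.rfl)

lemma invn_mul_swap_of_lt {w : Perm (Fin n)} {j k : Fin n} (hk : (k : ℕ) = (j : ℕ) + 1)
    (h : w j < w k) : invn (w * swap j k) = invn w + 1 := by
  obtain ⟨h1, h2⟩ := jk_mem_invSet_mul_swap (w := w) hk
  have hmem : (j, k) ∈ invSet (w * swap j k) := h1.2 h
  have hnmem : (j, k) ∉ invSet w := fun hc => absurd h (not_lt.2 (h2.1 hc).le)
  have e1 := Finset.card_erase_of_mem hmem
  have e2 : (invSet w).erase (j, k) = invSet w := Finset.erase_eq_of_notMem hnmem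
  have := invn_mul_swap_core (w := w) hk
  rw [e2] at this
  unfold invn
  have hpos : 0 < (invSet (w * swap j k)).card := Finset.card_pos.2 ⟨_, hmem⟩
  omega

lemma invn_mul_swap_of_gt {w : Perm (Fin n)} {j k : Fin n} (hk : (k : ℕ) = (j : ℕ) + 1)
    (h : w k < w j) : invn (w * swap j k) + 1 = invn w := by
  obtain ⟨h1, h2⟩ := jk_mem_invSet_mul_swap (w := w) hk
  have hmem : (j, k) ∈ invSet w := h2.2 h
  have hnmem : (j, k) ∉ invSet (w * swap j k) := fun hc => absurd h (not_lt.2 (h1.1 hc).le)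
  have e1 := Finset.card_erase_of_mem hmem
  have e2 : (invSet (w * swap j k)).erase (j, k) = invSet (w * swap j k) :=
    Finset.erase_eq_of_notMem hnmem
  have := invn_mul_swap_core (w := w) hk
  rw [e2] at this
  unfold invn
  have hpos : 0 < (invSet w).card := Finset.card_pos.2 ⟨_, hmem⟩
  omega

lemma invn_mul_swap_le {w : Perm (Fin n)} {j k : Fin n} (hk : (k : ℕ) = (j : ℕ) + 1) :
    invn (w * swap j k) ≤ invn w + 1 := by
  have hjk : j ≠ k := by simp only [ne_eq, Fin.ext_iff]; omega
  have : w j ≠ w k := fun h => hjk (w.injective h)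
  rcases lt_or_gt_of_ne this with h | h
  · rw [invn_mul_swap_of_lt hk h]
  · have := invn_mul_swap_of_gt hk h; omega

lemma invn_inv {w : Perm (Fin n)} : invn w⁻¹ = invn w := by
  unfold invn
  apply Finset.card_bij' (i := fun p _ => ((w⁻¹ : Perm (Fin n)) p.2, (w⁻¹ : Perm (Fin n)) p.1))
    (j := fun p _ => (w p.2, w p.1))
  · intro p hp
    rw [mem_invSet] at hp ⊢
    refine ⟨hp.2, ?_⟩
    simpa using hp.1
  · intro p hp
    rw [mem_invSet] at hp ⊢
    refine ⟨hp.2, ?_⟩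
    simpa using hp.1
  · intro p _; simp
  · intro p _; simp

end Inversions


section Length
variable {r n : ℕ}

/-- Total weight of a torus element. -/
def vwt (f : Multiplicative (Fin n → ZMod r)) : ℕ := ∑ i, (Multiplicative.toAdd f i).val

lemma vwt_mul_le [NeZero r] (f g : Multiplicative (Fin n → ZMod r)) :
    vwt (f * g) ≤ vwt f + vwt g := by
  unfold vwt
  rw [← Finset.sum_add_distrib]
  apply Finset.sum_le_sum
  intro i _
  have h : Multiplicative.toAdd (f * g) i =
      Multiplicative.toAdd f i + Multiplicative.toAdd g i := rfl
  rw [h, ZMod.val_add]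
  exact Nat.mod_le _ _

lemma vwt_one : vwt (1 : Multiplicative (Fin n → ZMod r)) = 0 := by
  unfold vwt
  apply Finset.sum_eq_zero
  intro i _
  have h : Multiplicative.toAdd (1 : Multiplicative (Fin n → ZMod r)) i = 0 := rfl
  rw [h, ZMod.val_zero]

lemma vwt_eq_zero [NeZero r] {f : Multiplicative (Fin n → ZMod r)} (h : vwt f = 0) : f = 1 := by
  have h2 : ∀ i ∈ Finset.univ, (Multiplicative.toAdd f i).val = 0 :=
    (Finset.sum_eq_zero_iff).1 h
  have h3 : Multiplicative.toAdd f = 0 := by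
    funext i
    have := h2 i (Finset.mem_univ i)
    rwa [ZMod.val_eq_zero] at this
  have : f = Multiplicative.ofAdd 0 := by
    rw [← h3]; rfl
  simpa using this

lemma vwt_act (w : Equiv.Perm (Fin n)) (f : Multiplicative (Fin n → ZMod r)) :
    vwt ((act r n w) f) = vwt f := by
  unfold vwt
  have h : ∀ i, Multiplicative.toAdd ((act r n w) f) i = Multiplicative.toAdd f (w⁻¹ i) :=
    fun i => rfl
  simp only [h]
  exact Equiv.sum_comp (w⁻¹ : Equiv.Perm (Fin n)) (fun j => (Multiplicative.toAdd f j).val)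

lemma vwt_single [NeZero r] (i : Fin n) (c : ZMod r) :
    vwt (Multiplicative.ofAdd (Pi.single i c)) = c.val := by
  unfold vwt
  simp only [toAdd_ofAdd]
  rw [Finset.sum_eq_single_of_mem i (Finset.mem_univ i)]
  · rw [Pi.single_eq_same]
  · intro j _ hj
    rw [Pi.single_eq_of_ne hj, ZMod.val_zero]

lemma zmod_val_sub_one [NeZero r] {x : ZMod r} (h : x ≠ 0) : (x - 1).val + 1 = x.val := by
  have h1 : x.val ≠ 0 := fun hc => h (by rwa [ZMod.val_eq_zero] at hc)
  have h2 : x.val < r := ZMod.val_lt x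
  have h3 : x - 1 = ((x.val - 1 : ℕ) : ZMod r) := by
    rw [Nat.cast_sub (by omega), Nat.cast_one, ZMod.natCast_val, ZMod.cast_id]
  rw [h3, ZMod.val_cast_of_lt (by omega)]
  omega

lemma tGen_mem_PiSet (i : Fin n) : tGen r n i ∈ PiSet r n := Or.inl ⟨i, rfl⟩

lemma sGen_mem_PiSet {j k : Fin n} (hk : (k : ℕ) = (j : ℕ) + 1) :
    sGen r n j k ∈ PiSet r n := Or.inr ⟨j, k, hk, rfl⟩

lemma act_single (w : Equiv.Perm (Fin n)) (i : Fin n) (c : ZMod r) :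
    (act r n w) (Multiplicative.ofAdd (Pi.single i c)) =
      Multiplicative.ofAdd (Pi.single (w i) c) := by
  show Multiplicative.ofAdd (fun j => (Pi.single i c : Fin n → ZMod r) (w⁻¹ j)) = _
  congr 1
  funext j
  rcases eq_or_ne j (w i) with rfl | hj
  · rw [show w⁻¹ (w i) = i from Equiv.symm_apply_apply w i, Pi.single_eq_same, Pi.single_eq_same]
  · have h1 : w⁻¹ j ≠ i := fun h => hj (by rw [← h]; simp)
    rw [Pi.single_eq_of_ne h1, Pi.single_eq_of_ne hj]

lemma exists_word [NeZero r] (hr : 2 ≤ r) (g : Grn r n) :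
    ∃ l : List (Grn r n), (∀ x ∈ l, x ∈ PiSet r n) ∧ l.prod = g ∧
      l.length = vwt g.left + invn g.right := by
  haveI : Fact (1 < r) := ⟨hr⟩
  suffices h : ∀ N : ℕ, ∀ g : Grn r n, vwt g.left + invn g.right = N →
      ∃ l : List (Grn r n), (∀ x ∈ l, x ∈ PiSet r n) ∧ l.prod = g ∧
        l.length = vwt g.left + invn g.right by exact h _ g rfl
  intro N
  induction N using Nat.strong_induction_on with
  | _ N ih =>
    intro g hN
    by_cases hv : vwt g.left = 0
    · have hfl : g.left = 1 := vwt_eq_zero hv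
      by_cases hw : g.right = 1
      · refine ⟨[], by simp, ?_, by simp [hv, hw, invn_one]⟩
        rw [← SemidirectProduct.inl_left_mul_inr_right g, hfl, hw]; simp
      · obtain ⟨j, k, hk, hdesc⟩ := exists_descent hw
        set w' := g.right * Equiv.swap j k with hw'
        have hinv : invn w' + 1 = invn g.right := invn_mul_swap_of_gt hk hdesc
        have hNval : vwt ((inr w' : Grn r n)).left + invn ((inr w' : Grn r n)).right < N := by
          simp only [SemidirectProduct.left_inr, SemidirectProduct.right_inr, vwt_one]
          omega
        obtain ⟨l, hmem, hprod, hlen⟩ := ih _ hNval (inr w') rfl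
        refine ⟨l ++ [sGen r n j k], ?_, ?_, ?_⟩
        · intro x hx
          rcases List.mem_append.1 hx with hx | hx
          · exact hmem x hx
          · rw [List.mem_singleton.1 hx]; exact sGen_mem_PiSet hk
        · rw [List.prod_append, List.prod_singleton, hprod, sGen]
          rw [← map_mul]
          have : w' * Equiv.swap j k = g.right := by
            rw [hw', mul_assoc, Equiv.swap_mul_self, mul_one]
          rw [this]
          conv_rhs => rw [← SemidirectProduct.inl_left_mul_inr_right g, hfl]
          simp
        · rw [List.length_append, List.length_singleton, hlen]
          simp only [SemidirectProduct.left_inr, SemidirectProduct.right_inr, vwt_one, hv]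
          omega
    · have hex : ∃ i, (Multiplicative.toAdd g.left i).val ≠ 0 := by
        by_contra hc
        push_neg at hc
        exact hv (Finset.sum_eq_zero fun i _ => hc i)
      obtain ⟨i, hi⟩ := hex
      set f' := g.left * (Multiplicative.ofAdd (Pi.single i (1 : ZMod r)))⁻¹ with hf'
      have hvf : vwt f' + 1 = vwt g.left := by
        have hpt : ∀ j, (Multiplicative.toAdd f' j).val + (if j = i then 1 else 0) =
            (Multiplicative.toAdd g.left j).val := by
          intro j
          have hco : Multiplicative.toAdd f' j =
              Multiplicative.toAdd g.left j - (Pi.single i 1 : Fin n → ZMod r) j := by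
            rw [hf']
            show Multiplicative.toAdd g.left j +
              (- (Pi.single i 1 : Fin n → ZMod r)) j = _
            rw [Pi.neg_apply, ← sub_eq_add_neg]
          rcases eq_or_ne j i with rfl | hj
          · rw [if_pos rfl, hco, Pi.single_eq_same]
            apply zmod_val_sub_one
            intro hc
            apply hi
            rw [hc, ZMod.val_zero]
          · rw [if_neg hj, hco, Pi.single_eq_of_ne hj, sub_zero, add_zero]
        have : ∑ j, ((Multiplicative.toAdd f' j).val + (if j = i then 1 else 0)) =
            vwt g.left := Finset.sum_congr rfl (fun j _ => hpt j)
        rw [Finset.sum_add_distrib, Finset.sum_ite_eq' Finset.univ i (fun _ => 1)] at this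
        simpa [vwt] using this
      have hNval : vwt ((inl f' * inr g.right : Grn r n)).left +
          invn ((inl f' * inr g.right : Grn r n)).right < N := by
        have hle : (inl f' * inr g.right : Grn r n).left = f' := by simp
        have hri : (inl f' * inr g.right : Grn r n).right = g.right := by simp
        rw [hle, hri]
        omega
      obtain ⟨l, hmem, hprod, hlen⟩ := ih _ hNval (inl f' * inr g.right) rfl
      refine ⟨tGen r n i :: l, ?_, ?_, ?_⟩
      · intro x hx
        rcases List.mem_cons.1 hx with rfl | hx
        · exact tGen_mem_PiSet i
        · exact hmem x hx
      · rw [List.prod_cons, hprod, tGen, ← mul_assoc, ← map_mul]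
        have : Multiplicative.ofAdd (Pi.single i (1 : ZMod r)) * f' = g.left := by
          rw [hf', mul_comm, inv_mul_cancel_right]
        rw [this, SemidirectProduct.inl_left_mul_inr_right]
      · have hle : (inl f' * inr g.right : Grn r n).left = f' := by simp
        have hri : (inl f' * inr g.right : Grn r n).right = g.right := by simp
        rw [List.length_cons, hlen, hle, hri]
        omega

lemma word_bound [NeZero r] (hr : 2 ≤ r) (l : List (Grn r n))
    (hmem : ∀ x ∈ l, x ∈ PiSet r n) :
    vwt (l.prod).left + invn (l.prod).right ≤ l.length := by
  haveI : Fact (1 < r) := ⟨hr⟩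
  induction l using List.reverseRecOn with
  | nil => simp [vwt_one, invn_one]
  | append_singleton l x ihl =>
    have h1 := ihl (fun y hy => hmem y (by simp [hy]))
    have hx : x ∈ PiSet r n := hmem x (by simp)
    rw [List.prod_append, List.prod_singleton, List.length_append, List.length_singleton]
    rcases hx with ⟨i, rfl⟩ | ⟨j, k, hk, rfl⟩
    · have hleft : (l.prod * tGen r n i).left =
          l.prod.left * (act r n l.prod.right) (Multiplicative.ofAdd (Pi.single i 1)) := by
        simp [tGen]
      have hright : (l.prod * tGen r n i).right = l.prod.right := by simp [tGen]
      rw [hleft, hright]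
      have h2 : vwt (l.prod.left *
          (act r n l.prod.right) (Multiplicative.ofAdd (Pi.single i (1 : ZMod r)))) ≤
          vwt l.prod.left + 1 := by
        calc vwt (l.prod.left *
            (act r n l.prod.right) (Multiplicative.ofAdd (Pi.single i (1 : ZMod r))))
            ≤ vwt l.prod.left +
              vwt ((act r n l.prod.right) (Multiplicative.ofAdd (Pi.single i (1 : ZMod r)))) :=
              vwt_mul_le _ _
          _ = vwt l.prod.left + vwt (Multiplicative.ofAdd (Pi.single i (1 : ZMod r))) := by
              rw [vwt_act]
          _ = vwt l.prod.left + 1 := by rw [vwt_single, ZMod.val_one]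
      omega
    · have hleft : (l.prod * sGen r n j k).left = l.prod.left := by simp [sGen]
      have hright : (l.prod * sGen r n j k).right = l.prod.right * Equiv.swap j k := by
        simp [sGen]
      rw [hleft, hright]
      have h2 := invn_mul_swap_le (w := l.prod.right) hk
      omega

lemma len_eq [NeZero r] (hr : 2 ≤ r) (g : Grn r n) :
    len r n g = vwt g.left + invn g.right := by
  obtain ⟨l, hm, hp, hl⟩ := exists_word hr g
  apply le_antisymm
  · exact Nat.sInf_le ⟨l, hl, hm, hp⟩
  · have hne : {k | ∃ l : List (Grn r n), l.length = k ∧ (∀ x ∈ l, x ∈ PiSet r n) ∧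
        l.prod = g}.Nonempty := ⟨l.length, l, rfl, hm, hp⟩
    have hmem := Nat.sInf_mem hne
    obtain ⟨l', hl', hm', hp'⟩ := hmem
    have := word_bound hr l' hm'
    rw [hp'] at this
    rw [len]
    omega

lemma invn_mul_le (x y : Equiv.Perm (Fin n)) : invn (x * y) ≤ invn x + invn y := by
  haveI : NeZero 2 := ⟨two_ne_zero⟩
  obtain ⟨lx, hxm, hxp, hxl⟩ := exists_word (r := 2) (n := n) (by norm_num) (inr x)
  obtain ⟨ly, hym, hyp, hyl⟩ := exists_word (r := 2) (n := n) (by norm_num) (inr y)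
  have hb := word_bound (r := 2) (by norm_num) (lx ++ ly) (by
    intro z hz
    rcases List.mem_append.1 hz with hz | hz
    · exact hxm z hz
    · exact hym z hz)
  rw [List.prod_append, hxp, hyp, ← map_mul, List.length_append, hxl, hyl] at hb
  simpa [vwt_one] using hb

end Length

section Blocks
variable {r n : ℕ}

lemma absPrefix_zero (μ : List ℤ) : absPrefix μ 0 = 0 := by simp [absPrefix]

lemma absPrefix_succ {μ : List ℤ} {i : ℕ} (h : i < μ.length) :
    absPrefix μ (i + 1) = absPrefix μ i + (μ.getD i 0).natAbs := by
  unfold absPrefix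
  rw [List.take_succ, List.map_append, List.sum_append]
  congr 1
  rw [List.getElem?_eq_getElem h, List.getD_eq_getElem μ 0 h]
  simp

lemma absPrefix_succ_of_ge {μ : List ℤ} {i : ℕ} (h : μ.length ≤ i) :
    absPrefix μ (i + 1) = absPrefix μ i := by
  unfold absPrefix
  rw [List.take_of_length_le h, List.take_of_length_le (by omega)]

lemma absPrefix_mono (μ : List ℤ) : Monotone (absPrefix μ) := by
  apply monotone_nat_of_le_succ
  intro i
  rcases lt_or_ge i μ.length with h | h
  · rw [absPrefix_succ h]; omega
  · rw [absPrefix_succ_of_ge h]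

lemma absPrefix_full {μ : List ℤ} (hsum : (μ.map Int.natAbs).sum = n) {i : ℕ}
    (h : μ.length ≤ i) : absPrefix μ i = n := by
  unfold absPrefix
  rw [List.take_of_length_le h, hsum]

lemma absPrefix_le {μ : List ℤ} (hsum : (μ.map Int.natAbs).sum = n) (i : ℕ) :
    absPrefix μ i ≤ n := by
  rcases le_or_gt μ.length i with h | h
  · rw [absPrefix_full hsum h]
  · calc absPrefix μ i ≤ absPrefix μ μ.length := absPrefix_mono μ h.le
      _ = n := absPrefix_full hsum le_rfl

/-- The index of the block containing position `j`. -/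
noncomputable def blkN (μ : List ℤ) (j : ℕ) : ℕ := sInf {i | j < absPrefix μ (i + 1)}

lemma blk_set_nonempty {μ : List ℤ} (hsum : (μ.map Int.natAbs).sum = n) {j : ℕ} (hj : j < n) :
    {i | j < absPrefix μ (i + 1)}.Nonempty :=
  ⟨μ.length, by rw [Set.mem_setOf_eq, absPrefix_full hsum (by omega)]; exact hj⟩

lemma lt_absPrefix_blk_succ {μ : List ℤ} (hsum : (μ.map Int.natAbs).sum = n) {j : ℕ}
    (hj : j < n) : j < absPrefix μ (blkN μ j + 1) :=
  Nat.sInf_mem (blk_set_nonempty hsum hj)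

lemma absPrefix_blk_le (μ : List ℤ) (j : ℕ) : absPrefix μ (blkN μ j) ≤ j := by
  cases h : blkN μ j with
  | zero => rw [absPrefix_zero]; omega
  | succ m =>
    have hm : m ∉ {i | j < absPrefix μ (i + 1)} :=
      Nat.notMem_of_lt_sInf (by rw [← blkN] at *; omega)
    rw [Set.mem_setOf_eq, not_lt] at hm
    exact hm

lemma blk_lt_length {μ : List ℤ} (hsum : (μ.map Int.natAbs).sum = n) {j : ℕ} (hj : j < n) :
    blkN μ j < μ.length := by
  by_contra h
  rw [not_lt] at h
  have := absPrefix_full hsum h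
  have := absPrefix_blk_le μ j
  omega

lemma blk_eq_of {μ : List ℤ} (hsum : (μ.map Int.natAbs).sum = n) {i j : ℕ}
    (h1 : absPrefix μ i ≤ j) (h2 : j < absPrefix μ (i + 1)) : blkN μ j = i := by
  have hj : j < n := lt_of_lt_of_le h2 (absPrefix_le hsum _)
  apply le_antisymm (Nat.sInf_le (show i ∈ {i' | j < absPrefix μ (i' + 1)} from h2))
  by_contra h
  rw [not_le] at h
  have h3 : blkN μ j + 1 ≤ i := h
  have h4 : absPrefix μ (blkN μ j + 1) ≤ absPrefix μ i := absPrefix_mono μ h3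
  have := lt_absPrefix_blk_succ hsum hj
  omega

lemma blk_mono {μ : List ℤ} (hsum : (μ.map Int.natAbs).sum = n) {j j' : ℕ}
    (hjj : j ≤ j') (hj' : j' < n) : blkN μ j ≤ blkN μ j' := by
  apply Nat.sInf_le
  have := lt_absPrefix_blk_succ hsum hj'
  exact lt_of_le_of_lt hjj this

/-- Position `j` lies in a positive block. -/
def PosB (μ : List ℤ) (j : ℕ) : Prop := 0 < μ.getD (blkN μ j) 0

/-- The group of block-preserving permutations. -/
def Wgrp (μ : List ℤ) (n : ℕ) : Subgroup (Equiv.Perm (Fin n)) where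
  carrier := {u | ∀ j : Fin n, blkN μ ((u j : Fin n) : ℕ) = blkN μ (j : ℕ)}
  one_mem' := by intro j; rfl
  mul_mem' := by
    intro u v hu hv j
    have h1 : (u * v) j = u (v j) := rfl
    rw [h1, hu (v j), hv j]
  inv_mem' := by
    intro u hu j
    have h := hu (u⁻¹ j)
    rw [show u (u⁻¹ j) = j from Equiv.apply_symm_apply u j] at h
    exact h.symm

lemma mem_Wgrp {μ : List ℤ} {u : Equiv.Perm (Fin n)} :
    u ∈ Wgrp μ n ↔ ∀ j : Fin n, blkN μ ((u j : Fin n) : ℕ) = blkN μ (j : ℕ) := Iff.rfl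

lemma swap_mem_Wgrp {μ : List ℤ} {j k : Fin n} (h : blkN μ (j : ℕ) = blkN μ (k : ℕ)) :
    Equiv.swap j k ∈ Wgrp μ n := by
  rw [mem_Wgrp]
  intro x
  rcases eq_or_ne x j with rfl | hxj
  · rw [Equiv.swap_apply_left, ← h]
  · rcases eq_or_ne x k with rfl | hxk
    · rw [Equiv.swap_apply_right, h]
    · rw [Equiv.swap_apply_of_ne_of_ne hxj hxk]

lemma posB_of_W {μ : List ℤ} {u : Equiv.Perm (Fin n)} (hu : u ∈ Wgrp μ n) (j : Fin n) :
    PosB μ ((u j : Fin n) : ℕ) ↔ PosB μ (j : ℕ) := by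
  unfold PosB
  rw [mem_Wgrp] at hu
  rw [hu j]

lemma act_apply (w : Equiv.Perm (Fin n)) (f : Multiplicative (Fin n → ZMod r)) (i : Fin n) :
    Multiplicative.toAdd ((act r n w) f) i = Multiplicative.toAdd f (w⁻¹ i) := rfl

/-- The subgroup of elements with torus part supported on positive blocks and
block-preserving permutation part. -/
def Psub (r n : ℕ) (μ : List ℤ) : Subgroup (Grn r n) where
  carrier := {g | (∀ i : Fin n, Multiplicative.toAdd g.left i ≠ 0 → PosB μ (i : ℕ)) ∧
    g.right ∈ Wgrp μ n}
  one_mem' := by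
    refine ⟨fun i hi => absurd ?_ hi, (Wgrp μ n).one_mem⟩
    rfl
  mul_mem' := by
    rintro a b ⟨ha1, ha2⟩ ⟨hb1, hb2⟩
    constructor
    · intro i hi
      have h1 : Multiplicative.toAdd (a * b).left i =
          Multiplicative.toAdd a.left i +
            Multiplicative.toAdd b.left ((a.right)⁻¹ i) := rfl
      rw [h1] at hi
      rcases eq_or_ne (Multiplicative.toAdd a.left i) 0 with h2 | h2
      · rw [h2, zero_add] at hi
        have h3 := hb1 _ hi
        have h4 := (posB_of_W ha2 ((a.right)⁻¹ i))
        rw [show a.right ((a.right)⁻¹ i) = i from Equiv.apply_symm_apply a.right i] at h4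
        exact h4.2 h3
      · exact ha1 i h2
    · exact (Wgrp μ n).mul_mem ha2 hb2
  inv_mem' := by
    rintro a ⟨ha1, ha2⟩
    constructor
    · intro i hi
      have h1 : Multiplicative.toAdd (a⁻¹).left i =
          - Multiplicative.toAdd a.left (a.right i) := by
        show Multiplicative.toAdd ((act r n a.right⁻¹) a.left⁻¹) i = _
        rw [act_apply]
        simp
      rw [h1, ne_eq, neg_eq_zero] at hi
      have h2 := ha1 _ hi
      exact (posB_of_W ha2 i).1 h2
    · exact (Wgrp μ n).inv_mem ha2

lemma Gmu_le_Psub {μ : List ℤ} (hsum : (μ.map Int.natAbs).sum = n) :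
    Gmu r n μ ≤ Psub r n μ := by
  rw [Gmu, Subgroup.closure_le]
  rintro g (⟨j, ⟨i, hilen, hipos, hile, hilt⟩, rfl⟩ | ⟨j, k, hk, ⟨i, hilen, hile, hklt⟩, rfl⟩)
  · constructor
    · intro x hx
      have hxj : x = j := by
        by_contra hxj
        apply hx
        show (Pi.single j 1 : Fin n → ZMod r) x = 0
        rw [Pi.single_eq_of_ne hxj]
      subst hxj
      have hblk : blkN μ (x : ℕ) = i := blk_eq_of hsum hile hilt
      unfold PosB
      rw [hblk]
      exact hipos
    · show (1 : Equiv.Perm (Fin n)) ∈ Wgrp μ n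
      exact (Wgrp μ n).one_mem
  · constructor
    · intro x hx
      exact absurd rfl hx
    · show Equiv.swap j k ∈ Wgrp μ n
      apply swap_mem_Wgrp
      have hbj : blkN μ (j : ℕ) = i := blk_eq_of hsum hile (by omega)
      have hbk : blkN μ (k : ℕ) = i := blk_eq_of hsum (by omega) hklt
      rw [hbj, hbk]

lemma tGen_mem_Gmu_of_pos {μ : List ℤ} (hsum : (μ.map Int.natAbs).sum = n) {j : Fin n}
    (hpos : PosB μ (j : ℕ)) : tGen r n j ∈ Gmu r n μ := by
  apply Subgroup.subset_closure
  exact Or.inl ⟨j, ⟨blkN μ (j : ℕ), blk_lt_length hsum j.isLt, hpos,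
    absPrefix_blk_le μ (j : ℕ), lt_absPrefix_blk_succ hsum j.isLt⟩, rfl⟩

lemma pos_of_tGen_mem (hr : 2 ≤ r) {μ : List ℤ} (hsum : (μ.map Int.natAbs).sum = n)
    {j : Fin n} (h : tGen r n j ∈ Gmu r n μ) : PosB μ (j : ℕ) := by
  haveI : Fact (1 < r) := ⟨hr⟩
  have h2 := (Gmu_le_Psub hsum h).1 j
  apply h2
  show (Pi.single j 1 : Fin n → ZMod r) j ≠ 0
  rw [Pi.single_eq_same]
  exact one_ne_zero

lemma tGen_mem_Gmu_iff (hr : 2 ≤ r) {μ : List ℤ} (hsum : (μ.map Int.natAbs).sum = n)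
    {j : Fin n} : tGen r n j ∈ Gmu r n μ ↔ PosB μ (j : ℕ) :=
  ⟨pos_of_tGen_mem hr hsum, tGen_mem_Gmu_of_pos hsum⟩

lemma sGen_mem_Gmu {μ : List ℤ} (hsum : (μ.map Int.natAbs).sum = n) {j k : Fin n}
    (hk : (k : ℕ) = (j : ℕ) + 1) (hblk : blkN μ (j : ℕ) = blkN μ (k : ℕ)) :
    sGen r n j k ∈ Gmu r n μ := by
  apply Subgroup.subset_closure
  refine Or.inr ⟨j, k, hk, ⟨blkN μ (j : ℕ), blk_lt_length hsum j.isLt,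
    absPrefix_blk_le μ (j : ℕ), ?_⟩, rfl⟩
  rw [hblk]
  exact lt_absPrefix_blk_succ hsum k.isLt

lemma inr_mem_Gmu_of_W {μ : List ℤ} (hsum : (μ.map Int.natAbs).sum = n)
    {u : Equiv.Perm (Fin n)} (hu : u ∈ Wgrp μ n) : (inr u : Grn r n) ∈ Gmu r n μ := by
  suffices h : ∀ N : ℕ, ∀ u : Equiv.Perm (Fin n), u ∈ Wgrp μ n → invn u = N →
      (inr u : Grn r n) ∈ Gmu r n μ by exact h _ u hu rfl
  intro N
  induction N using Nat.strong_induction_on with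
  | _ N ih =>
    intro u hu hN
    rcases eq_or_ne u 1 with rfl | hne
    · rw [map_one]; exact (Gmu r n μ).one_mem
    · obtain ⟨j, k, hk, hdesc⟩ := exists_descent hne
      have hblk : blkN μ (j : ℕ) = blkN μ (k : ℕ) := by
        have e1 := mem_Wgrp.1 hu j
        have e2 := mem_Wgrp.1 hu k
        have e3 : blkN μ ((u k : Fin n) : ℕ) ≤ blkN μ ((u j : Fin n) : ℕ) :=
          blk_mono hsum hdesc.le (u j).isLt
        have e4 : blkN μ (j : ℕ) ≤ blkN μ (k : ℕ) :=
          blk_mono hsum (by omega) k.isLt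
        omega
      have hu' : u * Equiv.swap j k ∈ Wgrp μ n := (Wgrp μ n).mul_mem hu (swap_mem_Wgrp hblk)
      have hinv : invn (u * Equiv.swap j k) + 1 = invn u := invn_mul_swap_of_gt hk hdesc
      have hmem := ih (invn (u * Equiv.swap j k)) (by omega) _ hu' rfl
      have : u = (u * Equiv.swap j k) * Equiv.swap j k := by
        rw [mul_assoc, Equiv.swap_mul_self, mul_one]
      rw [this, map_mul]
      exact (Gmu r n μ).mul_mem hmem (sGen_mem_Gmu hsum hk hblk)

lemma mem_youngS_iff {μ : List ℤ} (hsum : (μ.map Int.natAbs).sum = n)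
    {u : Equiv.Perm (Fin n)} : u ∈ youngS r n μ ↔ u ∈ Wgrp μ n := by
  constructor
  · intro h
    have h2 : (inr u : Grn r n) ∈ Gmu r n μ := h
    have := (Gmu_le_Psub hsum h2).2
    simpa using this
  · intro h
    exact inr_mem_Gmu_of_W hsum h

end Blocks

section MinRep
variable {n : ℕ}

/-- `d⁻¹` is increasing on each block. -/
def Qprop (μ : List ℤ) (d : Equiv.Perm (Fin n)) : Prop :=
  ∀ a b : Fin n, a < b → blkN μ (a : ℕ) = blkN μ (b : ℕ) → d⁻¹ a < d⁻¹ b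

lemma lt_of_blk_lt {μ : List ℤ} (hsum : (μ.map Int.natAbs).sum = n) {a b : Fin n}
    (h : blkN μ (a : ℕ) < blkN μ (b : ℕ)) : a < b := by
  by_contra h2
  rw [not_lt] at h2
  have := blk_mono hsum (show (b : ℕ) ≤ (a : ℕ) from h2) a.isLt
  omega

/-- The same-block inversions of `d⁻¹`. -/
noncomputable def msetF (μ : List ℤ) (d : Equiv.Perm (Fin n)) : Finset (Fin n × Fin n) :=
  Finset.univ.filter fun p => p.1 < p.2 ∧ blkN μ (p.1 : ℕ) = blkN μ (p.2 : ℕ) ∧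
    d⁻¹ p.2 < d⁻¹ p.1

lemma Q_of_mset_empty {μ : List ℤ} {d : Equiv.Perm (Fin n)}
    (h : msetF μ d = ∅) : Qprop μ d := by
  intro a b hab hblk
  by_contra hc
  rw [not_lt] at hc
  have hne : d⁻¹ a ≠ d⁻¹ b := fun he => hab.ne ((d⁻¹).injective he)
  have hmem : (a, b) ∈ msetF μ d := by
    rw [msetF, Finset.mem_filter]
    exact ⟨Finset.mem_univ _, hab, hblk, lt_of_le_of_ne hc hne.symm⟩
  rw [h] at hmem
  exact absurd hmem (Finset.notMem_empty _)

lemma exists_adj_bad {μ : List ℤ} (hsum : (μ.map Int.natAbs).sum = n)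
    {d : Equiv.Perm (Fin n)} (h : (msetF μ d).Nonempty) :
    ∃ j k : Fin n, (k : ℕ) = (j : ℕ) + 1 ∧ blkN μ (j : ℕ) = blkN μ (k : ℕ) ∧
      d⁻¹ k < d⁻¹ j := by
  by_contra hc
  push_neg at hc
  obtain ⟨⟨a, b⟩, hab⟩ := h
  rw [msetF, Finset.mem_filter] at hab
  obtain ⟨-, h1, h2, h3⟩ := hab
  dsimp only at h1 h2 h3
  have h1' : (a : ℕ) < (b : ℕ) := h1
  have hstep : ∀ a b : Fin n, (b : ℕ) = (a : ℕ) + 1 →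
      blkN μ (a : ℕ) = blkN μ (b : ℕ) → d⁻¹ a < d⁻¹ b := by
    intro a b hab hblk
    have h4 := hc a b hab hblk
    have hne : d⁻¹ a ≠ d⁻¹ b := fun he => by
      have : a = b := (d⁻¹).injective he
      omega
    exact lt_of_le_of_ne h4 hne
  have key : ∀ m : ℕ, ∀ a b : Fin n, (b : ℕ) = (a : ℕ) + (m + 1) →
      blkN μ (a : ℕ) = blkN μ (b : ℕ) → d⁻¹ a < d⁻¹ b := by
    intro m
    induction m with
    | zero => exact hstep
    | succ m ih =>
      intro a b hab hblk
      have hcn : (a : ℕ) + 1 < n := by have := b.isLt; omega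
      set c : Fin n := ⟨(a : ℕ) + 1, hcn⟩ with hcdef
      have hvc : (c : ℕ) = (a : ℕ) + 1 := rfl
      have hac : blkN μ (a : ℕ) ≤ blkN μ (c : ℕ) := blk_mono hsum (by omega) c.isLt
      have hcb : blkN μ (c : ℕ) ≤ blkN μ (b : ℕ) := blk_mono hsum (by omega) b.isLt
      have hblk1 : blkN μ (a : ℕ) = blkN μ (c : ℕ) := by omega
      have hblk2 : blkN μ (c : ℕ) = blkN μ (b : ℕ) := by omega
      exact lt_trans (hstep a c hvc hblk1) (ih c b (by omega) hblk2)
  exact absurd (key ((b : ℕ) - (a : ℕ) - 1) a b (by omega) h2)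
    (not_lt.2 h3.le)

lemma mset_swap_card {μ : List ℤ} {d : Equiv.Perm (Fin n)} {j k : Fin n}
    (hk : (k : ℕ) = (j : ℕ) + 1) (hblk : blkN μ (j : ℕ) = blkN μ (k : ℕ))
    (hbad : d⁻¹ k < d⁻¹ j) :
    (msetF μ (Equiv.swap j k * d)).card + 1 = (msetF μ d).card := by
  have hjk : j < k := by rw [Fin.lt_def]; omega
  have hswblk : ∀ x : Fin n, blkN μ ((Equiv.swap j k x : Fin n) : ℕ) = blkN μ (x : ℕ) :=
    mem_Wgrp.1 (swap_mem_Wgrp hblk)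
  have hinvapp : ∀ x : Fin n, (Equiv.swap j k * d)⁻¹ x = d⁻¹ (Equiv.swap j k x) := by
    intro x
    rw [mul_inv_rev]
    have : (Equiv.swap j k)⁻¹ = Equiv.swap j k := Equiv.swap_inv j k
    rw [Equiv.Perm.mul_apply, this]
  have hcore : ((msetF μ (Equiv.swap j k * d)).erase (j, k)).card =
      ((msetF μ d).erase (j, k)).card := by
    have e1 : msetF μ (Equiv.swap j k * d) = Finset.univ.filter
        fun p : Fin n × Fin n => p.1 < p.2 ∧ (blkN μ (p.1 : ℕ) = blkN μ (p.2 : ℕ) ∧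
          d⁻¹ (Equiv.swap j k p.2) < d⁻¹ (Equiv.swap j k p.1)) := by
      rw [msetF]
      apply Finset.filter_congr
      intro p _
      rw [hinvapp, hinvapp]
    have e2 : msetF μ d = Finset.univ.filter
        fun p : Fin n × Fin n => p.1 < p.2 ∧ (blkN μ (p.1 : ℕ) = blkN μ (p.2 : ℕ) ∧
          d⁻¹ p.2 < d⁻¹ p.1) := rfl
    rw [e1, e2]
    apply card_pairs_swap hk
    intro a b hab hne
    rw [hswblk a, hswblk b]
  have hmem1 : (j, k) ∈ msetF μ d := by
    rw [msetF, Finset.mem_filter]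
    exact ⟨Finset.mem_univ _, hjk, hblk, hbad⟩
  have hmem2 : (j, k) ∉ msetF μ (Equiv.swap j k * d) := by
    rw [msetF, Finset.mem_filter]
    rintro ⟨-, -, -, hlt⟩
    rw [hinvapp, hinvapp, Equiv.swap_apply_left, Equiv.swap_apply_right] at hlt
    exact absurd hbad (not_lt.2 hlt.le)
  have e3 := Finset.card_erase_of_mem hmem1
  have e4 : (msetF μ (Equiv.swap j k * d)).erase (j, k) = msetF μ (Equiv.swap j k * d) :=
    Finset.erase_eq_of_notMem hmem2
  rw [e4] at hcore
  have hpos : 0 < (msetF μ d).card := Finset.card_pos.2 ⟨_, hmem1⟩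
  omega

lemma invn_swap_mul {d : Equiv.Perm (Fin n)} {j k : Fin n}
    (hk : (k : ℕ) = (j : ℕ) + 1) (hbad : d⁻¹ k < d⁻¹ j) :
    invn (Equiv.swap j k * d) + 1 = invn d := by
  have h1 : invn (Equiv.swap j k * d) = invn (d⁻¹ * Equiv.swap j k) := by
    rw [← invn_inv (w := Equiv.swap j k * d), mul_inv_rev, Equiv.swap_inv]
  rw [h1, invn_mul_swap_of_gt hk hbad, invn_inv]

lemma exists_Qrep {μ : List ℤ} (hsum : (μ.map Int.natAbs).sum = n)
    (d : Equiv.Perm (Fin n)) : ∃ u ∈ Wgrp μ n, Qprop μ (u * d) := by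
  suffices h : ∀ N : ℕ, ∀ d : Equiv.Perm (Fin n), (msetF μ d).card = N →
      ∃ u ∈ Wgrp μ n, Qprop μ (u * d) by exact h _ d rfl
  intro N
  induction N using Nat.strong_induction_on with
  | _ N ih =>
    intro d hN
    rcases eq_or_ne (msetF μ d).card 0 with h0 | h0
    · refine ⟨1, (Wgrp μ n).one_mem, ?_⟩
      rw [one_mul]
      exact Q_of_mset_empty (Finset.card_eq_zero.1 h0)
    · obtain ⟨j, k, hk, hblk, hbad⟩ :=
        exists_adj_bad hsum (Finset.card_pos.1 (Nat.pos_of_ne_zero h0))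
      have hcard := mset_swap_card hk hblk hbad
      obtain ⟨u', hu', hQ⟩ := ih (msetF μ (Equiv.swap j k * d)).card (by omega)
        (Equiv.swap j k * d) rfl
      refine ⟨u' * Equiv.swap j k, (Wgrp μ n).mul_mem hu' (swap_mem_Wgrp hblk), ?_⟩
      rwa [mul_assoc]

lemma invn_add_of_Q {μ : List ℤ} (hsum : (μ.map Int.natAbs).sum = n)
    {e : Equiv.Perm (Fin n)} (hQ : Qprop μ e) {u : Equiv.Perm (Fin n)}
    (hu : u ∈ Wgrp μ n) : invn (u * e) = invn u + invn e := by
  classical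
  set S2 : Finset (Fin n × Fin n) := Finset.univ.filter
    (fun p : Fin n × Fin n => p.1 < p.2 ∧ e p.1 < e p.2 ∧ u (e p.2) < u (e p.1)) with hS2
  have happ : ∀ x, (u * e) x = u (e x) := fun x => rfl
  have hblk_u : ∀ x : Fin n, blkN μ ((u x : Fin n) : ℕ) = blkN μ (x : ℕ) := mem_Wgrp.1 hu
  have claim1 : invSet (u * e) = invSet e ∪ S2 := by
    ext p
    rw [Finset.mem_union, mem_invSet, mem_invSet, hS2, Finset.mem_filter]
    constructor
    · rintro ⟨hlt, hinv⟩
      rw [happ, happ] at hinv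
      rcases eq_or_ne (blkN μ ((e p.1 : Fin n) : ℕ)) (blkN μ ((e p.2 : Fin n) : ℕ))
        with hbe | hbe
      · have hne : e p.1 ≠ e p.2 := fun he => hlt.ne (e.injective he)
        have : ¬ (e p.2 < e p.1) := by
          intro hlt2
          have := hQ (e p.2) (e p.1) hlt2 hbe.symm
          simp only [Perm.coe_inv, Equiv.symm_apply_apply] at this
          exact absurd hlt (not_lt.2 this.le)
        right
        exact ⟨Finset.mem_univ _, hlt, lt_of_le_of_ne (not_lt.1 this) hne, hinv⟩
      · left
        refine ⟨hlt, ?_⟩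
        have h5 : blkN μ ((u (e p.2) : Fin n) : ℕ) ≤ blkN μ ((u (e p.1) : Fin n) : ℕ) :=
          blk_mono hsum hinv.le (u (e p.1)).isLt
        rw [hblk_u, hblk_u] at h5
        have h6 : blkN μ ((e p.2 : Fin n) : ℕ) < blkN μ ((e p.1 : Fin n) : ℕ) :=
          lt_of_le_of_ne h5 (fun hh => hbe hh.symm)
        exact lt_of_blk_lt hsum h6
    · rintro (⟨hlt, hinv⟩ | ⟨-, hlt, hef, hinv⟩)
      · refine ⟨hlt, ?_⟩
        rw [happ, happ]
        have hne : blkN μ ((e p.1 : Fin n) : ℕ) ≠ blkN μ ((e p.2 : Fin n) : ℕ) := by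
          intro he
          have := hQ (e p.2) (e p.1) hinv he.symm
          simp only [Perm.coe_inv, Equiv.symm_apply_apply] at this
          exact absurd hlt (not_lt.2 this.le)
        have h5 : blkN μ ((e p.2 : Fin n) : ℕ) ≤ blkN μ ((e p.1 : Fin n) : ℕ) :=
          blk_mono hsum hinv.le (e p.1).isLt
        have h6 : blkN μ ((e p.2 : Fin n) : ℕ) < blkN μ ((e p.1 : Fin n) : ℕ) :=
          lt_of_le_of_ne h5 (fun hh => hne hh.symm)
        have h7 : blkN μ ((u (e p.2) : Fin n) : ℕ) < blkN μ ((u (e p.1) : Fin n) : ℕ) := by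
          rw [hblk_u, hblk_u]; exact h6
        exact lt_of_blk_lt hsum h7
      · exact ⟨hlt, by rw [happ, happ]; exact hinv⟩
  have claim2 : Disjoint (invSet e) S2 := by
    rw [Finset.disjoint_left]
    intro p hp hp2
    rw [mem_invSet] at hp
    rw [hS2, Finset.mem_filter] at hp2
    exact absurd hp.2 (not_lt.2 hp2.2.2.1.le)
  have claim3 : S2.card = invn u := by
    unfold invn
    apply Finset.card_bij' (i := fun p _ => (e p.1, e p.2))
      (j := fun q _ => (e⁻¹ q.1, e⁻¹ q.2))
    · intro p hp
      rw [hS2, Finset.mem_filter] at hp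
      rw [mem_invSet]
      exact ⟨hp.2.2.1, hp.2.2.2⟩
    · intro q hq
      rw [mem_invSet] at hq
      obtain ⟨hlt, hinv⟩ := hq
      have hbq : blkN μ ((q.1 : Fin n) : ℕ) = blkN μ ((q.2 : Fin n) : ℕ) := by
        by_contra hne
        have h5 : blkN μ ((q.1 : Fin n) : ℕ) ≤ blkN μ ((q.2 : Fin n) : ℕ) :=
          blk_mono hsum hlt.le q.2.isLt
        have h6 : blkN μ ((q.1 : Fin n) : ℕ) < blkN μ ((q.2 : Fin n) : ℕ) :=
          lt_of_le_of_ne h5 hne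
        have h7 : blkN μ ((u q.1 : Fin n) : ℕ) < blkN μ ((u q.2 : Fin n) : ℕ) := by
          rw [hblk_u, hblk_u]; exact h6
        exact absurd (lt_of_blk_lt hsum h7) (not_lt.2 hinv.le)
      have hq12 : e⁻¹ q.1 < e⁻¹ q.2 := hQ q.1 q.2 hlt hbq
      rw [hS2, Finset.mem_filter]
      refine ⟨Finset.mem_univ _, hq12, ?_, ?_⟩
      · simp only [Perm.coe_inv, Equiv.apply_symm_apply]; exact hlt
      · simp only [Perm.coe_inv, Equiv.apply_symm_apply]; exact hinv
    · intro p _; simp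
    · intro q _; simp
  have hfin : invn (u * e) = invn e + invn u := by
    rw [invn, claim1, Finset.card_union_of_disjoint claim2, claim3]
    rfl
  omega

lemma min_double {μ : List ℤ} (hsum : (μ.map Int.natAbs).sum = n) {d : Equiv.Perm (Fin n)}
    (hmin : ∀ u ∈ Wgrp μ n, invn d ≤ invn (u * d)) :
    ∀ u ∈ Wgrp μ n, invn (u * d) = invn u + invn d := by
  obtain ⟨u₀, hu₀, hQ⟩ := exists_Qrep hsum d
  have he : invn d = invn u₀⁻¹ + invn (u₀ * d) := by
    have h1 := invn_add_of_Q hsum hQ ((Wgrp μ n).inv_mem hu₀)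
    rw [← mul_assoc, inv_mul_cancel, one_mul] at h1
    exact h1
  have hd0 : invn u₀⁻¹ = 0 := by
    have := hmin u₀ hu₀
    omega
  have hu1 : u₀ = 1 := by
    have := invn_eq_zero_iff.1 hd0
    rwa [inv_eq_one] at this
  rw [hu1, one_mul] at hQ
  intro u hu
  exact invn_add_of_Q hsum hQ hu

end MinRep

section TnegCount
variable {r n : ℕ}

lemma tGen_pow (i : Fin n) (m : ℕ) :
    tGen r n i ^ m = inl (Multiplicative.ofAdd (Pi.single i ((m : ZMod r)))) := by
  rw [tGen, ← map_pow]
  congr 1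
  have h1 : (Multiplicative.ofAdd (Pi.single i (1 : ZMod r) : Fin n → ZMod r)) ^ m =
      Multiplicative.ofAdd (m • (Pi.single i (1 : ZMod r) : Fin n → ZMod r)) :=
    (ofAdd_nsmul m (Pi.single i (1 : ZMod r) : Fin n → ZMod r)).symm
  rw [h1]
  congr 1
  funext j
  rcases eq_or_ne j i with rfl | hj
  · simp only [Pi.smul_apply, Pi.single_eq_same, nsmul_eq_mul, mul_one]
  · simp only [Pi.smul_apply, Pi.single_eq_of_ne hj, smul_zero, Pi.single_eq_of_ne hj]

lemma toAdd_mul_inv_single (f : Multiplicative (Fin n → ZMod r)) (i : Fin n) (c : ZMod r)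
    (j : Fin n) :
    Multiplicative.toAdd (f * (Multiplicative.ofAdd (Pi.single i c : Fin n → ZMod r))⁻¹) j =
      Multiplicative.toAdd f j - (Pi.single i c : Fin n → ZMod r) j := by
  show Multiplicative.toAdd f j + (- (Pi.single i c : Fin n → ZMod r)) j = _
  rw [Pi.neg_apply, ← sub_eq_add_neg]

lemma vwt_erase [NeZero r] (f : Multiplicative (Fin n → ZMod r)) (i : Fin n) :
    vwt (f * (Multiplicative.ofAdd
        (Pi.single i (Multiplicative.toAdd f i) : Fin n → ZMod r))⁻¹) +
      (Multiplicative.toAdd f i).val = vwt f := by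
  set c := Multiplicative.toAdd f i with hc
  set f' := f * (Multiplicative.ofAdd (Pi.single i c : Fin n → ZMod r))⁻¹ with hf'
  have hpt : ∀ j, (Multiplicative.toAdd f' j).val + (if j = i then c.val else 0) =
      (Multiplicative.toAdd f j).val := by
    intro j
    rcases eq_or_ne j i with rfl | hj
    · rw [if_pos rfl, hf', toAdd_mul_inv_single, Pi.single_eq_same, ← hc, sub_self,
        ZMod.val_zero, zero_add]
    · rw [if_neg hj, hf', toAdd_mul_inv_single, Pi.single_eq_of_ne hj, sub_zero, add_zero]
  have hsum : ∑ j, ((Multiplicative.toAdd f' j).val + (if j = i then c.val else 0)) =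
      vwt f := Finset.sum_congr rfl (fun j _ => hpt j)
  rw [Finset.sum_add_distrib, Finset.sum_ite_eq' Finset.univ i (fun _ => c.val)] at hsum
  simpa [vwt] using hsum

/-- The subgroup of torus elements supported on `S`. -/
def TsetSub (r n : ℕ) (S : Set (Fin n)) : Subgroup (Grn r n) where
  carrier := {g | g.right = 1 ∧
    ∀ i : Fin n, i ∉ S → Multiplicative.toAdd g.left i = 0}
  one_mem' := ⟨rfl, fun i _ => rfl⟩
  mul_mem' := by
    rintro a b ⟨ha1, ha2⟩ ⟨hb1, hb2⟩
    constructor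
    · show a.right * b.right = 1
      rw [ha1, hb1, mul_one]
    · intro i hi
      have h1 : Multiplicative.toAdd (a * b).left i =
          Multiplicative.toAdd a.left i + Multiplicative.toAdd b.left ((a.right)⁻¹ i) := rfl
      rw [h1, ha1, ha2 i hi]
      have h2 : ((1 : Equiv.Perm (Fin n)))⁻¹ i = i := rfl
      rw [h2, hb2 i hi, add_zero]
  inv_mem' := by
    rintro a ⟨ha1, ha2⟩
    constructor
    · show (a.right)⁻¹ = 1
      rw [ha1, inv_one]
    · intro i hi
      have h1 : Multiplicative.toAdd (a⁻¹).left i =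
          - Multiplicative.toAdd a.left (a.right i) := by
        show Multiplicative.toAdd ((act r n a.right⁻¹) a.left⁻¹) i = _
        rw [act_apply]
        simp
      rw [h1, ha1]
      have h2 : (1 : Equiv.Perm (Fin n)) i = i := rfl
      rw [h2, ha2 i hi, neg_zero]

lemma mem_TsetSub {S : Set (Fin n)} {g : Grn r n} :
    g ∈ TsetSub r n S ↔ g.right = 1 ∧
      ∀ i : Fin n, i ∉ S → Multiplicative.toAdd g.left i = 0 := Iff.rfl

lemma inl_mem_TsetSub {S : Set (Fin n)} {f : Multiplicative (Fin n → ZMod r)} :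
    inl f ∈ TsetSub r n S ↔ ∀ i : Fin n, i ∉ S → Multiplicative.toAdd f i = 0 := by
  rw [mem_TsetSub]
  simp

lemma eq_inl_of_right_eq_one {g : Grn r n} (h : g.right = 1) : g = inl g.left := by
  conv_lhs => rw [← SemidirectProduct.inl_left_mul_inr_right g]
  rw [h, map_one, mul_one]

lemma TsetSub_le [NeZero r] {S : Set (Fin n)} {H : Subgroup (Grn r n)}
    (hgen : ∀ i : Fin n, i ∈ S → tGen r n i ∈ H) : TsetSub r n S ≤ H := by
  have key : ∀ N : ℕ, ∀ f : Multiplicative (Fin n → ZMod r), vwt f = N →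
      (∀ i : Fin n, i ∉ S → Multiplicative.toAdd f i = 0) → (inl f : Grn r n) ∈ H := by
    intro N
    induction N using Nat.strong_induction_on with
    | _ N ih =>
      intro f hN hsupp
      by_cases hv : vwt f = 0
      · rw [vwt_eq_zero hv, map_one]
        exact H.one_mem
      · have hex : ∃ i, (Multiplicative.toAdd f i).val ≠ 0 := by
          by_contra hcon
          push_neg at hcon
          exact hv (Finset.sum_eq_zero fun i _ => hcon i)
        obtain ⟨i, hi⟩ := hex
        have hiS : i ∈ S := by
          by_contra hcon
          rw [hsupp i hcon, ZMod.val_zero] at hi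
          exact hi rfl
        set f' := f * (Multiplicative.ofAdd
          (Pi.single i (Multiplicative.toAdd f i) : Fin n → ZMod r))⁻¹ with hf'
        have herase := vwt_erase f i
        rw [← hf'] at herase
        have hsupp' : ∀ j : Fin n, j ∉ S → Multiplicative.toAdd f' j = 0 := by
          intro j hj
          have hji : j ≠ i := fun he => hj (he ▸ hiS)
          rw [hf', toAdd_mul_inv_single, Pi.single_eq_of_ne hji, sub_zero]
          exact hsupp j hj
        have hmem' := ih (vwt f') (by omega) f' rfl hsupp'
        have hdec : (inl f : Grn r n) = tGen r n i ^ (Multiplicative.toAdd f i).val *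
            inl f' := by
          rw [tGen_pow, ← map_mul]
          congr 1
          rw [ZMod.natCast_val, ZMod.cast_id, hf', mul_comm f, ← mul_assoc,
            mul_inv_cancel, one_mul]
        rw [hdec]
        exact H.mul_mem (H.pow_mem (hgen i hiS) _) hmem'
  intro g hg
  rw [mem_TsetSub] at hg
  rw [eq_inl_of_right_eq_one hg.1]
  exact key _ g.left rfl hg.2

lemma Tneg_eq (hr : 2 ≤ r) {μ : List ℤ} (hsum : (μ.map Int.natAbs).sum = n) :
    Tneg r n μ = TsetSub r n {i : Fin n | ¬ PosB μ (i : ℕ)} := by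
  haveI : NeZero r := ⟨by omega⟩
  apply le_antisymm
  · rw [Tneg, Subgroup.closure_le]
    rintro g ⟨i, hi, rfl⟩
    rw [SetLike.mem_coe, tGen, inl_mem_TsetSub]
    intro x hx
    rw [Set.mem_setOf_eq, not_not] at hx
    have hxi : x ≠ i := by
      rintro rfl
      exact hi (tGen_mem_Gmu_of_pos hsum hx)
    show (Pi.single i 1 : Fin n → ZMod r) x = 0
    rw [Pi.single_eq_of_ne hxi]
  · apply TsetSub_le
    intro i hiS
    apply Subgroup.subset_closure
    refine ⟨i, ?_, rfl⟩
    rw [tGen_mem_Gmu_iff hr hsum]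
    exact hiS

lemma conj_inl (d : Equiv.Perm (Fin n)) (m : Multiplicative (Fin n → ZMod r)) :
    (inr d : Grn r n) * inl m * (inr d)⁻¹ = inl ((act r n d) m) := by
  rw [← map_inv]
  exact (inl_aut d m).symm

lemma act_act_inv (d : Equiv.Perm (Fin n)) (f : Multiplicative (Fin n → ZMod r)) :
    (act r n d) ((act r n d⁻¹) f) = f := by
  have h : (act r n d) ((act r n d⁻¹) f) = ((act r n d) * (act r n d⁻¹)) f := rfl
  rw [h, ← map_mul, mul_inv_cancel, map_one]
  rfl

lemma TsetSub_conj (d : Equiv.Perm (Fin n)) (S : Set (Fin n)) :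
    (TsetSub r n S).map (MulAut.conj (inr d : Grn r n)).toMonoidHom =
      TsetSub r n ((fun i => d i) '' S) := by
  ext g
  rw [Subgroup.mem_map]
  constructor
  · rintro ⟨h, hh, rfl⟩
    rw [mem_TsetSub] at hh
    have hc : (MulAut.conj (inr d : Grn r n)).toMonoidHom h =
        inl ((act r n d) h.left) := by
      show (inr d : Grn r n) * h * (inr d)⁻¹ = _
      conv_lhs => rw [eq_inl_of_right_eq_one hh.1]
      exact conj_inl d h.left
    rw [hc, inl_mem_TsetSub]
    intro i hi
    have h2 : d⁻¹ i ∉ S := by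
      intro hcon
      exact hi ⟨d⁻¹ i, hcon, by simp⟩
    rw [act_apply]
    exact hh.2 _ h2
  · intro hg
    rw [mem_TsetSub] at hg
    refine ⟨inl ((act r n d⁻¹) g.left), ?_, ?_⟩
    · rw [inl_mem_TsetSub]
      intro i hi
      rw [act_apply]
      have h2 : d i ∉ (fun i => d i) '' S := by
        rintro ⟨x, hx, hdx⟩
        exact hi (d.injective hdx ▸ hx)
      have h3 := hg.2 (d i) h2
      simpa using h3
    · show (inr d : Grn r n) * inl ((act r n d⁻¹) g.left) * (inr d)⁻¹ = g
      rw [conj_inl, act_act_inv]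
      exact (eq_inl_of_right_eq_one hg.1).symm

lemma TsetSub_inf (S₁ S₂ : Set (Fin n)) :
    TsetSub r n S₁ ⊓ TsetSub r n S₂ = TsetSub r n (S₁ ∩ S₂) := by
  ext g
  rw [Subgroup.mem_inf, mem_TsetSub, mem_TsetSub, mem_TsetSub]
  constructor
  · rintro ⟨⟨h1, h2⟩, ⟨-, h4⟩⟩
    refine ⟨h1, fun i hi => ?_⟩
    rcases Classical.em (i ∈ S₁) with hc | hc
    · exact h4 i (fun hc2 => hi ⟨hc, hc2⟩)
    · exact h2 i hc
  · rintro ⟨h1, h2⟩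
    exact ⟨⟨h1, fun i hi => h2 i (fun hc => hi hc.1)⟩,
      ⟨h1, fun i hi => h2 i (fun hc => hi hc.2)⟩⟩

lemma TsetSub_card [NeZero r] (S : Set (Fin n)) :
    Nat.card (TsetSub r n S) = r ^ S.ncard := by
  classical
  have he : (TsetSub r n S) ≃ (S → ZMod r) := {
    toFun := fun g => fun i => Multiplicative.toAdd (g : Grn r n).left i.1
    invFun := fun φ => ⟨inl (Multiplicative.ofAdd
        (fun i => if h : i ∈ S then φ ⟨i, h⟩ else 0)), by
      rw [inl_mem_TsetSub]
      intro i hi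
      show (if h : i ∈ S then φ ⟨i, h⟩ else 0) = 0
      rw [dif_neg hi]⟩
    left_inv := by
      rintro ⟨g, hg⟩
      rw [mem_TsetSub] at hg
      apply Subtype.ext
      show inl _ = g
      conv_rhs => rw [eq_inl_of_right_eq_one hg.1]
      congr 1
      apply Multiplicative.toAdd.injective
      funext i
      show (if h : i ∈ S then Multiplicative.toAdd g.left i else 0) =
        Multiplicative.toAdd g.left i
      rcases Classical.em (i ∈ S) with hc | hc
      · rw [dif_pos hc]
      · rw [dif_neg hc, hg.2 i hc]
    right_inv := by
      intro φ
      funext i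
      show (if h : i.1 ∈ S then φ ⟨i.1, h⟩ else 0) = φ i
      rw [dif_pos i.2]
  }
  rw [Nat.card_congr he, Nat.card_fun, Nat.card_zmod, Nat.card_coe_set_eq]

end TnegCount

section Final
variable {r n : ℕ}

lemma len_inr (hr : 2 ≤ r) (w : Equiv.Perm (Fin n)) : len r n (inr w) = invn w := by
  haveI : NeZero r := ⟨by omega⟩
  rw [len_eq hr]
  simp only [SemidirectProduct.left_inr, SemidirectProduct.right_inr, vwt_one, zero_add]

lemma conj_tGen (d : Equiv.Perm (Fin n)) (i : Fin n) :
    (inr d : Grn r n)⁻¹ * tGen r n i * inr d = tGen r n (d⁻¹ i) := by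
  have h := conj_inl (r := r) d⁻¹ (Multiplicative.ofAdd (Pi.single i (1 : ZMod r)))
  rw [act_single] at h
  rw [tGen, tGen, ← h, map_inv, inv_inv]

lemma tPow_left (α : Fin n → Fin r) (d : Equiv.Perm (Fin n)) :
    (tPow r n α * inr d : Grn r n).left =
      Multiplicative.ofAdd (fun i => ((α i : ℕ) : ZMod r)) := by
  simp [tPow]

lemma tPow_right (α : Fin n → Fin r) (d : Equiv.Perm (Fin n)) :
    (tPow r n α * inr d : Grn r n).right = d := by
  simp [tPow]

lemma vwt_tPow [NeZero r] (α : Fin n → Fin r) :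
    vwt (Multiplicative.ofAdd (fun i => ((α i : ℕ) : ZMod r)) :
      Multiplicative (Fin n → ZMod r)) = ∑ i, ((α i : ℕ)) := by
  unfold vwt
  apply Finset.sum_congr rfl
  intro i _
  show (((α i : ℕ) : ZMod r)).val = (α i : ℕ)
  exact ZMod.val_cast_of_lt (α i).isLt

lemma funsupp_card [NeZero r] (K : Set (Fin n)) :
    Nat.card ({α : Fin n → Fin r | ∀ i : Fin n, i ∉ K → α i = 0}) = r ^ K.ncard := by
  classical
  have he : ({α : Fin n → Fin r | ∀ i : Fin n, i ∉ K → α i = 0}) ≃ (K → Fin r) := {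
    toFun := fun α => fun i => (α : Fin n → Fin r) i.1
    invFun := fun φ => ⟨fun i => if h : i ∈ K then φ ⟨i, h⟩ else 0, by
      intro i hi
      show (if h : i ∈ K then φ ⟨i, h⟩ else 0) = 0
      rw [dif_neg hi]⟩
    left_inv := by
      rintro ⟨α, hα⟩
      apply Subtype.ext
      funext i
      show (if h : i ∈ K then α i else 0) = α i
      rcases Classical.em (i ∈ K) with hc | hc
      · rw [dif_pos hc]
      · rw [dif_neg hc, hα i hc]
    right_inv := by
      intro φ
      funext i
      show (if h : i.1 ∈ K then φ ⟨i.1, h⟩ else 0) = φ i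
      rw [dif_pos i.2]
  }
  rw [Nat.card_congr he, Nat.card_fun, Nat.card_coe_set_eq, Nat.card_eq_fintype_card,
    Fintype.card_fin]

end Final

theorem stmt6 (r n : ℕ) (hr : 2 ≤ r) (hn : 1 ≤ n) (μ ν : List ℤ)
    (hμ : IsSignedComp n μ) (hν : IsSignedComp n ν)
    (d : Equiv.Perm (Fin n)) (hd : d ∈ DD r n μ ν) :
    Set.ncard {x : Grn r n | (∃ α : Fin n → Fin r, x = tPow r n α * inr d) ∧
        (∀ g : Grn r n, (∃ a ∈ Gmu r n μ, ∃ b ∈ Gmu r n ν, g = a * x * b) →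
          len r n x ≤ len r n g)} =
      Nat.card ↥(Tneg r n μ ⊓ (Tneg r n ν).map (MulAut.conj (inr d : Grn r n)).toMonoidHom) ∧
    Nat.card ↥(Tneg r n μ ⊓ (Tneg r n ν).map (MulAut.conj (inr d : Grn r n)).toMonoidHom) =
      r ^ Set.ncard {i : Fin n | tGen r n i ∉ Gmu r n μ ∧
            (inr d : Grn r n)⁻¹ * tGen r n i * inr d ∉ Gmu r n ν} := by
  classical
  haveI : NeZero r := ⟨by omega⟩
  haveI : Fact (1 < r) := ⟨hr⟩
  obtain ⟨hμ0, hμsum⟩ := hμ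
  obtain ⟨hν0, hνsum⟩ := hν
  obtain ⟨hd1, hd2⟩ := hd
  -- minimality of d within double cosets
  have hmin1 : ∀ u ∈ Wgrp μ n, invn d ≤ invn (u * d) := by
    intro u hu
    have h := hd1 (u * d) (by
      have he : (u * d) * d⁻¹ = u := by group
      rw [he]
      exact (mem_youngS_iff hμsum).2 hu)
    rwa [len_inr hr, len_inr hr] at h
  have hmin2 : ∀ v ∈ Wgrp ν n, invn d⁻¹ ≤ invn (v * d⁻¹) := by
    intro v hv
    have h := hd2 (v * d⁻¹) (by
      have he : (v * d⁻¹) * (d⁻¹)⁻¹ = v := by group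
      rw [he]
      exact (mem_youngS_iff hνsum).2 hv)
    rwa [len_inr hr, len_inr hr] at h
  have hadd1 := min_double hμsum hmin1
  have hadd2 := min_double hνsum hmin2
  have hkey : ∀ u ∈ Wgrp μ n, ∀ v ∈ Wgrp ν n, invn d ≤ invn (u * d * v) := by
    intro u hu v hv
    have h1 : invn (u * d) ≤ invn (u * d * v) + invn v := by
      have h := invn_mul_le (u * d * v) v⁻¹
      have he : u * d * v * v⁻¹ = u * d := by group
      rw [he, invn_inv] at h
      exact h
    have h3 : invn (d * v) = invn v + invn d := by
      have h := hadd2 v⁻¹ ((Wgrp ν n).inv_mem hv)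
      calc invn (d * v) = invn ((d * v)⁻¹) := (invn_inv).symm
        _ = invn (v⁻¹ * d⁻¹) := by rw [mul_inv_rev]
        _ = invn v⁻¹ + invn d⁻¹ := h
        _ = invn v + invn d := by rw [invn_inv, invn_inv]
    have h4 : invn (d * v) ≤ invn u + invn (u * d * v) := by
      have h := invn_mul_le u⁻¹ (u * d * v)
      have he : u⁻¹ * (u * d * v) = d * v := by group
      rw [he, invn_inv] at h
      exact h
    have h5 := hadd1 u hu
    omega
  -- the index set K
  set K : Set (Fin n) :=
    {i : Fin n | ¬ PosB μ (i : ℕ) ∧ ¬ PosB ν (((d⁻¹ i : Fin n)) : ℕ)} with hK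
  have h444 : {i : Fin n | tGen r n i ∉ Gmu r n μ ∧
      (inr d : Grn r n)⁻¹ * tGen r n i * inr d ∉ Gmu r n ν} = K := by
    ext i
    rw [hK, Set.mem_setOf_eq, Set.mem_setOf_eq, conj_tGen, tGen_mem_Gmu_iff hr hμsum,
      tGen_mem_Gmu_iff hr hνsum]
  have hsub : Tneg r n μ ⊓ (Tneg r n ν).map (MulAut.conj (inr d : Grn r n)).toMonoidHom =
      TsetSub r n K := by
    rw [Tneg_eq hr hμsum, Tneg_eq hr hνsum, TsetSub_conj, TsetSub_inf]
    congr 1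
    ext i
    constructor
    · rintro ⟨h1, x, hx, rfl⟩
      refine ⟨h1, ?_⟩
      have he : d⁻¹ (d x) = x := Equiv.symm_apply_apply d x
      rw [he]
      exact hx
    · rintro ⟨h1, h2⟩
      exact ⟨h1, d⁻¹ i, h2, Equiv.apply_symm_apply d i⟩
  -- length of elements t^α d
  have hxlen : ∀ α : Fin n → Fin r,
      len r n (tPow r n α * inr d) = (∑ i, ((α i : ℕ))) + invn d := by
    intro α
    rw [len_eq hr, tPow_left, tPow_right, vwt_tPow]
  -- torus coordinate of t^α d
  have hxleft : ∀ (α : Fin n → Fin r) (j : Fin n),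
      Multiplicative.toAdd ((tPow r n α * inr d : Grn r n).left) j = ((α j : ℕ) : ZMod r) := by
    intro α j
    rw [tPow_left]
    rfl
  set A : Set (Fin n → Fin r) := {α | ∀ i : Fin n, i ∉ K → α i = 0} with hA
  -- the two directions of the set identity
  have hSeq : {x : Grn r n | (∃ α : Fin n → Fin r, x = tPow r n α * inr d) ∧
      (∀ g : Grn r n, (∃ a ∈ Gmu r n μ, ∃ b ∈ Gmu r n ν, g = a * x * b) →
        len r n x ≤ len r n g)} = (fun α => tPow r n α * inr d) '' A := by
    ext x
    constructor
    · rintro ⟨⟨α, rfl⟩, hmin⟩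
      refine ⟨α, ?_, rfl⟩
      intro i hiK
      by_contra hαi
      have hipos : 0 < (α i : ℕ) := by
        rcases Nat.eq_zero_or_pos (α i : ℕ) with h | h
        · exact absurd (Fin.ext (h.trans (Fin.val_zero r).symm)) hαi
        · exact h
      -- the element cancelling coordinate i
      have hcastc : (((r - (α i : ℕ)) : ℕ) : ZMod r) = - ((α i : ℕ) : ZMod r) := by
        rw [Nat.cast_sub (α i).isLt.le, ZMod.natCast_self, zero_sub]
      have hofadd : Multiplicative.ofAdd
            (Pi.single i (((r - (α i : ℕ) : ℕ)) : ZMod r) : Fin n → ZMod r) =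
          (Multiplicative.ofAdd
            (Pi.single i (((α i : ℕ)) : ZMod r) : Fin n → ZMod r))⁻¹ := by
        rw [← ofAdd_neg]
        congr 1
        funext j
        rcases eq_or_ne j i with rfl | hj
        · rw [Pi.neg_apply, Pi.single_eq_same, Pi.single_eq_same, hcastc]
        · rw [Pi.neg_apply, Pi.single_eq_of_ne hj, Pi.single_eq_of_ne hj, neg_zero]
      -- the new torus part and its weight
      have hvwt_new : vwt ((tPow r n α * inr d : Grn r n).left *
            (Multiplicative.ofAdd
              (Pi.single i (((α i : ℕ)) : ZMod r) : Fin n → ZMod r))⁻¹) +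
          (α i : ℕ) = ∑ j, ((α j : ℕ)) := by
        have h := vwt_erase ((tPow r n α * inr d : Grn r n).left) i
        rw [hxleft α i] at h
        rw [tPow_left] at h ⊢
        rw [vwt_tPow] at h
        have hval : (((α i : ℕ) : ZMod r)).val = (α i : ℕ) := ZMod.val_cast_of_lt (α i).isLt
        rw [hval] at h
        exact h
      rw [hK, Set.mem_setOf_eq, not_and_or, not_not, not_not] at hiK
      rcases hiK with hpos | hpos
      · -- left multiplication by a power of t_i
        set a : Grn r n := tGen r n i ^ (r - (α i : ℕ)) with ha
        have haG : a ∈ Gmu r n μ :=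
          Subgroup.pow_mem _ (tGen_mem_Gmu_of_pos hμsum hpos) _
        have hmin' := hmin (a * (tPow r n α * inr d) * 1)
          ⟨a, haG, 1, (Gmu r n ν).one_mem, rfl⟩
        have hg : a * (tPow r n α * inr d) * 1 =
            inl ((Multiplicative.ofAdd
              (Pi.single i (((α i : ℕ)) : ZMod r) : Fin n → ZMod r))⁻¹) *
            (tPow r n α * inr d) := by
          rw [mul_one, ha, tGen_pow, hcastc]
          congr 2
          rw [← hofadd]
          congr 1
          rw [hcastc]
        have hglen : len r n (a * (tPow r n α * inr d) * 1) =
            vwt ((tPow r n α * inr d : Grn r n).left *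
              (Multiplicative.ofAdd
                (Pi.single i (((α i : ℕ)) : ZMod r) : Fin n → ZMod r))⁻¹) + invn d := by
          rw [hg, len_eq hr]
          have hl : ((inl ((Multiplicative.ofAdd
              (Pi.single i (((α i : ℕ)) : ZMod r) : Fin n → ZMod r))⁻¹) :
                Grn r n) * (tPow r n α * inr d)).left =
              (Multiplicative.ofAdd
                (Pi.single i (((α i : ℕ)) : ZMod r) : Fin n → ZMod r))⁻¹ *
              (tPow r n α * inr d : Grn r n).left := rfl
          have hrr : ((inl ((Multiplicative.ofAdd
              (Pi.single i (((α i : ℕ)) : ZMod r) : Fin n → ZMod r))⁻¹) :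
                Grn r n) * (tPow r n α * inr d)).right =
              (tPow r n α * inr d : Grn r n).right := by
            show 1 * _ = _
            rw [one_mul]
          rw [hl, hrr, tPow_right, mul_comm]
        rw [hxlen α, hglen] at hmin'
        omega
      · -- right multiplication by a power of t_{d⁻¹ i}
        set b : Grn r n := tGen r n (d⁻¹ i) ^ (r - (α i : ℕ)) with hb
        have hbG : b ∈ Gmu r n ν :=
          Subgroup.pow_mem _ (tGen_mem_Gmu_of_pos hνsum hpos) _
        have hmin' := hmin (1 * (tPow r n α * inr d) * b)
          ⟨1, (Gmu r n μ).one_mem, b, hbG, rfl⟩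
        have hbleft : b = inl (Multiplicative.ofAdd
            (Pi.single (d⁻¹ i) (((r - (α i : ℕ) : ℕ)) : ZMod r) : Fin n → ZMod r)) := by
          rw [hb, tGen_pow]
        have hglen : len r n (1 * (tPow r n α * inr d) * b) =
            vwt ((tPow r n α * inr d : Grn r n).left *
              (Multiplicative.ofAdd
                (Pi.single i (((α i : ℕ)) : ZMod r) : Fin n → ZMod r))⁻¹) + invn d := by
          rw [one_mul, hbleft, len_eq hr]
          have hl : ((tPow r n α * inr d : Grn r n) * inl (Multiplicative.ofAdd
              (Pi.single (d⁻¹ i) (((r - (α i : ℕ) : ℕ)) : ZMod r) : Fin n → ZMod r))).left =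
              (tPow r n α * inr d : Grn r n).left *
              (act r n d) (Multiplicative.ofAdd
                (Pi.single (d⁻¹ i) (((r - (α i : ℕ) : ℕ)) : ZMod r) : Fin n → ZMod r)) := by
            rw [SemidirectProduct.mul_left, SemidirectProduct.left_inl, tPow_right]
          have hrr : ((tPow r n α * inr d : Grn r n) * inl (Multiplicative.ofAdd
              (Pi.single (d⁻¹ i) (((r - (α i : ℕ) : ℕ)) : ZMod r) : Fin n → ZMod r))).right =
              (tPow r n α * inr d : Grn r n).right * 1 := rfl
          rw [hl, hrr, mul_one, tPow_right, act_single, show d (d⁻¹ i) = i from Equiv.apply_symm_apply d i, hofadd]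
        rw [hxlen α, hglen] at hmin'
        omega
    · rintro ⟨α, hαA, rfl⟩
      refine ⟨⟨α, rfl⟩, ?_⟩
      rintro g ⟨a, ha, b, hb, rfl⟩
      show len r n (tPow r n α * inr d) ≤ len r n (a * (tPow r n α * inr d) * b)
      have hu : a.right ∈ Wgrp μ n := (Gmu_le_Psub hμsum ha).2
      have hv : b.right ∈ Wgrp ν n := (Gmu_le_Psub hνsum hb).2
      have hpa := (Gmu_le_Psub hμsum ha).1
      have hqb := (Gmu_le_Psub hνsum hb).1
      have hright : (a * (tPow r n α * inr d) * b : Grn r n).right = a.right * d * b.right := by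
        show (a.right * (tPow r n α * inr d : Grn r n).right) * b.right = _
        rw [tPow_right]
      have hterm : ∀ j : Fin n, ((α j : ℕ)) ≤
          (Multiplicative.toAdd ((a * (tPow r n α * inr d) * b : Grn r n).left) (a.right j)).val := by
        intro j
        by_cases hα0 : α j = 0
        · rw [hα0]
          simp
        · have hjK : j ∈ K := by
            by_contra h
            exact hα0 (hαA j h)
          rw [hK, Set.mem_setOf_eq] at hjK
          obtain ⟨hnp1, hnp2⟩ := hjK
          have hformula : Multiplicative.toAdd ((a * (tPow r n α * inr d) * b : Grn r n).left)
              (a.right j) = Multiplicative.toAdd a.left (a.right j) +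
                (((α j : ℕ) : ZMod r) + Multiplicative.toAdd b.left (d⁻¹ j)) := by
            rw [mul_assoc]
            have e1 : Multiplicative.toAdd ((a * ((tPow r n α * inr d) * b) : Grn r n).left)
                (a.right j) = Multiplicative.toAdd a.left (a.right j) +
                  Multiplicative.toAdd (((tPow r n α * inr d : Grn r n) * b).left)
                    ((a.right)⁻¹ (a.right j)) := rfl
            rw [e1, show (a.right)⁻¹ (a.right j) = j from Equiv.symm_apply_apply a.right j]
            congr 1
            have e2 : Multiplicative.toAdd (((tPow r n α * inr d : Grn r n) * b).left) j =
                Multiplicative.toAdd ((tPow r n α * inr d : Grn r n).left) j +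
                  Multiplicative.toAdd b.left
                    (((tPow r n α * inr d : Grn r n).right)⁻¹ j) := rfl
            rw [e2, hxleft α j, tPow_right]
          have hza : Multiplicative.toAdd a.left (a.right j) = 0 := by
            by_contra hc
            have := hpa (a.right j) hc
            exact hnp1 ((posB_of_W hu j).1 this)
          have hzb : Multiplicative.toAdd b.left (d⁻¹ j) = 0 := by
            by_contra hc
            exact hnp2 (hqb (d⁻¹ j) hc)
          rw [hformula, hza, hzb, add_zero, zero_add,
            ZMod.val_cast_of_lt (α j).isLt]
      have hvwt : (∑ i, ((α i : ℕ))) ≤ vwt ((a * (tPow r n α * inr d) * b : Grn r n).left) := by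
        calc (∑ i, ((α i : ℕ)))
            ≤ ∑ j, (Multiplicative.toAdd ((a * (tPow r n α * inr d) * b : Grn r n).left)
                (a.right j)).val := Finset.sum_le_sum (fun j _ => hterm j)
          _ = ∑ j, (Multiplicative.toAdd ((a * (tPow r n α * inr d) * b : Grn r n).left) j).val :=
              Equiv.sum_comp a.right
                (fun j => (Multiplicative.toAdd
                  ((a * (tPow r n α * inr d) * b : Grn r n).left) j).val)
          _ = vwt ((a * (tPow r n α * inr d) * b : Grn r n).left) := rfl
      have hinv_ge : invn d ≤ invn ((a * (tPow r n α * inr d) * b : Grn r n).right) := by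
        rw [hright]
        exact hkey a.right hu b.right hv
      rw [hxlen α, len_eq hr]
      omega
  -- injectivity of α ↦ t^α d
  have hinj : Function.Injective (fun α : Fin n → Fin r => tPow r n α * (inr d : Grn r n)) := by
    intro α β hc
    simp only at hc
    have h1 : tPow r n α = tPow r n β := mul_right_cancel hc
    rw [tPow, tPow] at h1
    have h2 := inl_injective h1
    have h3 := Multiplicative.ofAdd.injective h2
    funext i
    have h4 : ((α i : ℕ) : ZMod r) = ((β i : ℕ) : ZMod r) := congrFun h3 i
    have h5 := congrArg ZMod.val h4
    rw [ZMod.val_cast_of_lt (α i).isLt, ZMod.val_cast_of_lt (β i).isLt] at h5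
    exact Fin.ext h5
  have hAcard : A.ncard = r ^ K.ncard := by
    rw [← Nat.card_coe_set_eq, hA]
    exact funsupp_card K
  constructor
  · rw [hSeq, Set.ncard_image_of_injective _ hinj, hsub, TsetSub_card, hAcard]
  · rw [hsub, TsetSub_card, h444]


end CycSol
end
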